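/- arXiv:1412.1793 — 3 statements merged into one kernel-verified Lean document; each statement's English description precedes it below -/
import Mathlib

section
/- For all integers n and ℓ ≥ 1, there exists a graph G_{n,ℓ} whose distance VC-dimension is at most 18 and such that the 2VC-dimension of the B_ℓ-hypergraph of G_{n,ℓ} is at least n. -/
open SimpleGraph
open Classical

/-- The ball of center `v` and radius `k` in a graph. -/
def gball {V : Type*} (G : SimpleGraph V) (v : V) (k : ℕ) : Set V :=
  {w | G.edist v w ≤ (k : ℕ∞)}

/-- `X` is shattered by the B-hypergraph of `G` (hyperedges: all balls of all radii). -/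
def BShattered {V : Type*} (G : SimpleGraph V) (X : Set V) : Prop :=
  ∀ Y ⊆ X, ∃ (v : V) (k : ℕ), gball G v k ∩ X = Y

/-- The distance VC-dimension of `G` is at most `d`. -/
def distVCdimLE {V : Type*} (G : SimpleGraph V) (d : ℕ) : Prop :=
  ∀ (S : Set V) (X : Set S), BShattered (G.induce S) X → X.ncard ≤ d

/-- `X` is 2-shattered by the `B_ℓ`-hypergraph of `G` (hyperedges: balls of radius `ℓ`). -/
def Bl2Shattered {V : Type*} (G : SimpleGraph V) (ℓ : ℕ) (X : Set V) : Prop :=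
  ∀ Y ⊆ X, Y.ncard = 2 → ∃ v : V, gball G v ℓ ∩ X = Y

namespace VCC
noncomputable section

variable {n ℓ : ℕ}

abbrev Pr (n : ℕ) := {p : Fin n × Fin n // p.1 < p.2}

abbrev Vt (n ℓ : ℕ) := Fin n ⊕ (Pr n × Fin ℓ)

def adj : Vt n ℓ → Vt n ℓ → Prop
  | .inl x, .inl z => x ≠ z
  | .inl x, .inr w => w.2.val = 0 ∧ (x = w.1.val.1 ∨ x = w.1.val.2)
  | .inr w, .inl x => w.2.val = 0 ∧ (x = w.1.val.1 ∨ x = w.1.val.2)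
  | .inr w, .inr w' => w.1 = w'.1 ∧ (w.2.val + 1 = w'.2.val ∨ w'.2.val + 1 = w.2.val)

def Gr (n ℓ : ℕ) : SimpleGraph (Vt n ℓ) where
  Adj := adj
  symm := by refine ⟨?_⟩; rintro (x|w) (z|w') h <;> simp only [adj] at * <;> tauto
  loopless := by
    refine ⟨?_⟩; rintro (x|w) h <;> simp only [adj] at h
    · exact h rfl
    · omega

def dep : Vt n ℓ → ℕ
  | .inl _ => 0
  | .inr w => w.2.val + 1

def hasTip : Vt n ℓ → Fin n → Prop
  | .inl x, t => t = x
  | .inr w, t => t = w.1.val.1 ∨ t = w.1.val.2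

def br : Vt n ℓ → Fin n ⊕ Pr n
  | .inl x => .inl x
  | .inr w => .inr w.1

lemma eq_of_br_dep {u w : Vt n ℓ} (hb : br u = br w) (hd : dep u = dep w) : u = w := by
  cases u with
  | inl x => cases w with
    | inl z => simp [br] at hb; simp [hb]
    | inr w' => simp [br] at hb
  | inr p => cases w with
    | inl z => simp [br] at hb
    | inr w' =>
      simp only [br, Sum.inr.injEq] at hb
      simp only [dep, Nat.add_right_cancel_iff] at hd
      obtain ⟨e, i⟩ := p; obtain ⟨f, j⟩ := w'
      simp_all [Fin.ext_iff, Prod.ext_iff]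

section withS

variable (S : Set (Vt n ℓ))

def seg (e : Pr n) (i j : Fin ℓ) : Prop :=
  ∀ k : Fin ℓ, min i.val j.val ≤ k.val → k.val ≤ max i.val j.val → Sum.inr (e, k) ∈ S

def attached : Vt n ℓ → Prop
  | .inl x => Sum.inl x ∈ S
  | .inr w => (∀ k : Fin ℓ, k.val ≤ w.2.val → Sum.inr (w.1, k) ∈ S) ∧
      (Sum.inl w.1.val.1 ∈ S ∨ Sum.inl w.1.val.2 ∈ S)

def core (u : Vt n ℓ) : Prop := u ∈ S ∧ attached S u

def shares (u w : Vt n ℓ) : Prop := ∃ t, hasTip u t ∧ hasTip w t ∧ Sum.inl t ∈ S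

def linked (u w : Vt n ℓ) : Prop :=
  (core S u ∧ core S w) ∨ (∃ e i j, u = Sum.inr (e, i) ∧ w = Sum.inr (e, j) ∧ seg S e i j)

noncomputable def Dfin (u w : Vt n ℓ) : ℕ :=
  if br u = br w then Nat.dist (dep u) (dep w)
  else dep u + dep w + 1 - (if shares S u w then 1 else 0)


variable {S : Set (Vt n ℓ)}

lemma seg_symm {e : Pr n} {i j : Fin ℓ} (h : seg S e i j) : seg S e j i := by
  intro k h1 h2; exact h k (by omega) (by omega)

lemma seg_self {e : Pr n} {i : Fin ℓ} (h : Sum.inr (e, i) ∈ S) : seg S e i i := by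
  intro k h1 h2
  have : k = i := Fin.ext (by omega)
  rwa [this]

lemma seg_sub {e : Pr n} {i j k : Fin ℓ} (h : seg S e i j)
    (h1 : min i.val j.val ≤ k.val) (h2 : k.val ≤ max i.val j.val) : seg S e i k := by
  intro k' hk1 hk2; exact h k' (by omega) (by omega)

lemma attached_of_seg {e : Pr n} {i j : Fin ℓ} (ha : attached S (Sum.inr (e, i)))
    (hs : seg S e i j) : attached S (Sum.inr (e, j)) := by
  obtain ⟨hpre, htip⟩ := ha
  dsimp only at hpre htip ⊢
  refine ⟨fun k hk => ?_, htip⟩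
  dsimp only at hk
  rcases le_or_gt k.val i.val with h | h
  · exact hpre k h
  · exact hs k (by omega) (by omega)

lemma seg_of_attached {e : Pr n} {i j : Fin ℓ} (ha : attached S (Sum.inr (e, i)))
    (hb : attached S (Sum.inr (e, j))) : seg S e i j := by
  intro k h1 h2
  have ha1 := ha.1; have hb1 := hb.1
  dsimp only at ha1 hb1
  rcases le_or_gt k.val i.val with h | h
  · exact ha1 k h
  · exact hb1 k (by omega)

/-- Core is closed under adjacency (within S). -/
lemma core_adj {u a : Vt n ℓ} (hu : u ∈ S) (hadj : adj u a) (ha : core S a) : core S u := by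
  refine ⟨hu, ?_⟩
  cases u with
  | inl x => exact hu
  | inr w =>
    obtain ⟨e, i⟩ := w
    cases a with
    | inl z =>
      simp only [adj] at hadj
      obtain ⟨hi0, hz⟩ := hadj
      refine ⟨fun k hk => ?_, ?_⟩
      · dsimp only at hk hi0
        have : k = i := Fin.ext (by omega)
        rwa [this]
      · rcases hz with h | h <;> [left; right] <;> rw [← h] <;> exact ha.1
    | inr w' =>
      obtain ⟨f, j⟩ := w'
      simp only [adj] at hadj
      obtain ⟨hef, hij⟩ := hadj
      subst hef
      obtain ⟨hpre, htip⟩ := ha.2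
      refine ⟨fun k hk => ?_, htip⟩
      dsimp only at hk hij hpre
      rcases le_or_gt k.val j.val with h | h
      · exact hpre k h
      · have : k = i := Fin.ext (by omega)
        rwa [this]

lemma linked_self {u : Vt n ℓ} (hu : u ∈ S) : linked S u u := by
  cases u with
  | inl x => exact Or.inl ⟨⟨hu, hu⟩, ⟨hu, hu⟩⟩
  | inr w => exact Or.inr ⟨w.1, w.2, w.2, by simp, by simp, seg_self hu⟩

lemma shares_symm {u w : Vt n ℓ} (h : shares S u w) : shares S w u := by
  obtain ⟨t, h1, h2, h3⟩ := h; exact ⟨t, h2, h1, h3⟩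

lemma hasTip_br_eq {u w : Vt n ℓ} (h : br u = br w) {t : Fin n} :
    hasTip u t ↔ hasTip w t := by
  cases u with
  | inl x => cases w with
    | inl z => simp only [br, Sum.inl.injEq] at h; simp [hasTip, h]
    | inr w' => exact absurd h (by simp [br])
  | inr p => cases w with
    | inl z => exact absurd h (by simp [br])
    | inr w' => simp only [br, Sum.inr.injEq] at h; simp [hasTip, h]

lemma shares_congr {u w w' : Vt n ℓ} (h : br w = br w') :
    shares S u w ↔ shares S u w' := by
  constructor <;> rintro ⟨t, h1, h2, h3⟩
  · exact ⟨t, h1, (hasTip_br_eq h).mp h2, h3⟩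
  · exact ⟨t, h1, (hasTip_br_eq h).mpr h2, h3⟩

lemma Dfin_comm (u w : Vt n ℓ) : Dfin S u w = Dfin S w u := by
  unfold Dfin
  by_cases h : br u = br w
  · rw [if_pos h, if_pos h.symm, Nat.dist_comm]
  · have h' : ¬ br w = br u := fun hh => h hh.symm
    rw [if_neg h, if_neg h']
    have : shares S u w ↔ shares S w u := ⟨shares_symm, shares_symm⟩
    rw [if_congr this rfl rfl]
    omega

lemma linked_symm {u w : Vt n ℓ} (h : linked S u w) : linked S w u := by
  rcases h with ⟨h1, h2⟩ | ⟨e, i, j, rfl, rfl, hs⟩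
  · exact Or.inl ⟨h2, h1⟩
  · exact Or.inr ⟨e, j, i, rfl, rfl, seg_symm hs⟩


lemma br_eq_inl {w : Vt n ℓ} {x : Fin n} (h : br w = Sum.inl x) : w = Sum.inl x := by
  cases w with
  | inl z => simp only [br, Sum.inl.injEq] at h; rw [h]
  | inr p => exact absurd h (by simp [br])

lemma br_inr_eq {w : Vt n ℓ} {e : Pr n} (h : br w = Sum.inr e) : ∃ q, w = Sum.inr (e, q) := by
  cases w with
  | inl z => exact absurd h (by simp [br])
  | inr p => simp only [br, Sum.inr.injEq] at h; exact ⟨p.2, by rw [← h]⟩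

lemma dfin_self (u : Vt n ℓ) : Dfin S u u = 0 := by simp [Dfin, Nat.dist_self]

lemma sigma_le_one (u w : Vt n ℓ) : (if shares S u w then 1 else 0) ≤ 1 := by
  split <;> omega

lemma dfin_crossEq {u w : Vt n ℓ} (h : ¬ br u = br w) :
    Dfin S u w = dep u + dep w + 1 - (if shares S u w then 1 else 0) := if_neg h

lemma dfin_brEq {u w : Vt n ℓ} (h : br u = br w) :
    Dfin S u w = Nat.dist (dep u) (dep w) := if_pos h

lemma shares_inl_inl {x y : Fin n} (h : shares S (Sum.inl x : Vt n ℓ) (Sum.inl y)) : x = y := by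
  obtain ⟨t, h1, h2, _⟩ := h
  have hx : t = x := h1
  have hy : t = y := h2
  rw [← hx, hy]

/-- Main arithmetic step: Dfin is 1-Lipschitz along edges. -/
lemma dfin_step {u a w : Vt n ℓ} (hu : u ∈ S) (ha : a ∈ S) (hadj : adj u a) :
    Dfin S u w ≤ Dfin S a w + 1 := by
  cases u with
  | inl x =>
    cases a with
    | inl z =>
      cases w with
      | inl y =>
        by_cases h1 : y = x
        · subst h1; rw [dfin_brEq rfl]; simp [Nat.dist_self]
        · by_cases h2 : y = z
          · subst h2
            rw [dfin_brEq rfl, dfin_crossEq (by simp [br, Ne.symm h1])]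
            have := sigma_le_one (S := S) (Sum.inl x : Vt n ℓ) (Sum.inl y)
            simp only [dep, Nat.dist_self]; omega
          · rw [dfin_crossEq (by simp [br, Ne.symm h1]), dfin_crossEq (by simp [br, Ne.symm h2])]
            have h3 := sigma_le_one (S := S) (Sum.inl x : Vt n ℓ) (Sum.inl y)
            have h4 := sigma_le_one (S := S) (Sum.inl z : Vt n ℓ) (Sum.inl y)
            simp only [dep]; omega
      | inr p =>
        obtain ⟨g, q⟩ := p
        rw [dfin_crossEq (by simp [br]), dfin_crossEq (by simp [br])]
        have h3 := sigma_le_one (S := S) (Sum.inl x : Vt n ℓ) (Sum.inr (g, q))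
        have h4 := sigma_le_one (S := S) (Sum.inl z : Vt n ℓ) (Sum.inr (g, q))
        simp only [dep]; omega
    | inr p =>
      obtain ⟨e, j⟩ := p
      simp only [adj] at hadj
      obtain ⟨hj0, hx⟩ := hadj
      cases w with
      | inl y =>
        by_cases h1 : y = x
        · subst h1; rw [dfin_brEq rfl]; simp [Nat.dist_self]
        · rw [dfin_crossEq (by simp [br, Ne.symm h1]), dfin_crossEq (by simp [br])]
          have h3 := sigma_le_one (S := S) (Sum.inl x : Vt n ℓ) (Sum.inl y)
          have h4 := sigma_le_one (S := S) (Sum.inr (e, j) : Vt n ℓ) (Sum.inl y)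
          simp only [dep]; omega
      | inr p' =>
        obtain ⟨g, q⟩ := p'
        by_cases h1 : g = e
        · subst h1
          have hsh : shares S (Sum.inl x : Vt n ℓ) (Sum.inr (g, q)) := ⟨x, rfl, hx, hu⟩
          rw [dfin_crossEq (by simp [br]), if_pos hsh,
            dfin_brEq (show br (Sum.inr (g, j) : Vt n ℓ) = br (Sum.inr (g, q)) from rfl)]
          simp only [dep, Nat.dist]; omega
        · rw [dfin_crossEq (by simp [br]), dfin_crossEq (by simp [br, h1, Ne.symm h1])]
          have h3 := sigma_le_one (S := S) (Sum.inl x : Vt n ℓ) (Sum.inr (g, q))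
          have h4 := sigma_le_one (S := S) (Sum.inr (e, j) : Vt n ℓ) (Sum.inr (g, q))
          simp only [dep]; omega
  | inr p =>
    obtain ⟨e, i⟩ := p
    cases a with
    | inl x =>
      simp only [adj] at hadj
      obtain ⟨hi0, hx⟩ := hadj
      have htipu : hasTip (Sum.inr (e, i) : Vt n ℓ) x := hx
      cases w with
      | inl y =>
        by_cases h1 : y = x
        · subst h1
          have hsh : shares S (Sum.inr (e, i) : Vt n ℓ) (Sum.inl y) := ⟨y, htipu, rfl, ha⟩
          rw [dfin_crossEq (by simp [br]), dfin_brEq rfl, if_pos hsh]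
          simp only [dep, Nat.dist_self]; omega
        · have hsa : ¬ shares S (Sum.inl x : Vt n ℓ) (Sum.inl y) :=
            fun hh => h1 (shares_inl_inl hh).symm
          rw [dfin_crossEq (by simp [br]), dfin_crossEq (by simp [br, Ne.symm h1]), if_neg hsa]
          have h3 := sigma_le_one (S := S) (Sum.inr (e, i) : Vt n ℓ) (Sum.inl y)
          simp only [dep]; omega
      | inr p' =>
        obtain ⟨g, q⟩ := p'
        by_cases h1 : g = e
        · subst h1
          rw [dfin_brEq (show br (Sum.inr (g, i) : Vt n ℓ) = br (Sum.inr (g, q)) from rfl),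
            dfin_crossEq (by simp [br])]
          have h4 := sigma_le_one (S := S) (Sum.inl x : Vt n ℓ) (Sum.inr (g, q))
          simp only [dep, Nat.dist]; omega
        · have hmono : shares S (Sum.inl x : Vt n ℓ) (Sum.inr (g, q)) →
              shares S (Sum.inr (e, i) : Vt n ℓ) (Sum.inr (g, q)) := by
            rintro ⟨t, h1', h2', h3'⟩
            have : t = x := h1'
            subst this
            exact ⟨t, htipu, h2', h3'⟩
          rw [dfin_crossEq (by simp [br, h1, Ne.symm h1]), dfin_crossEq (by simp [br])]
          by_cases hsa : shares S (Sum.inl x : Vt n ℓ) (Sum.inr (g, q))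
          · rw [if_pos hsa, if_pos (hmono hsa)]; simp only [dep]; omega
          · rw [if_neg hsa]
            have h3 := sigma_le_one (S := S) (Sum.inr (e, i) : Vt n ℓ) (Sum.inr (g, q))
            simp only [dep]; omega
    | inr p' =>
      obtain ⟨f, j⟩ := p'
      simp only [adj] at hadj
      obtain ⟨hef, hij⟩ := hadj
      subst hef
      have hcong : ∀ w', shares S (Sum.inr (e, i) : Vt n ℓ) w' ↔
          shares S (Sum.inr (e, j) : Vt n ℓ) w' := by
        intro w'
        constructor <;> rintro ⟨t, h1', h2', h3'⟩ <;> exact ⟨t, h1', h2', h3'⟩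
      cases w with
      | inl y =>
        rw [dfin_crossEq (by simp [br]), dfin_crossEq (by simp [br])]
        by_cases hsa : shares S (Sum.inr (e, i) : Vt n ℓ) (Sum.inl y)
        · rw [if_pos hsa, if_pos ((hcong _).mp hsa)]; simp only [dep]; omega
        · rw [if_neg hsa, if_neg (fun hh => hsa ((hcong _).mpr hh))]
          simp only [dep]; omega
      | inr p'' =>
        obtain ⟨g, q⟩ := p''
        by_cases h1 : g = e
        · subst h1
          rw [dfin_brEq (show br (Sum.inr (g, i) : Vt n ℓ) = br (Sum.inr (g, q)) from rfl),
            dfin_brEq (show br (Sum.inr (g, j) : Vt n ℓ) = br (Sum.inr (g, q)) from rfl)]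
          simp only [dep, Nat.dist]; omega
        · rw [dfin_crossEq (by simp [br, h1, Ne.symm h1]),
            dfin_crossEq (by simp [br, h1, Ne.symm h1])]
          by_cases hsa : shares S (Sum.inr (e, i) : Vt n ℓ) (Sum.inr (g, q))
          · rw [if_pos hsa, if_pos ((hcong _).mp hsa)]; simp only [dep]; omega
          · rw [if_neg hsa, if_neg (fun hh => hsa ((hcong _).mpr hh))]
            simp only [dep]; omega


lemma linked_step {u a w : Vt n ℓ} (hu : u ∈ S) (ha : a ∈ S) (hadj : adj u a)
    (hl : linked S a w) : linked S u w := by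
  rcases hl with ⟨hca, hcw⟩ | ⟨e, p, q, rfl, rfl, hs⟩
  · exact Or.inl ⟨core_adj hu hadj hca, hcw⟩
  · by_cases hcw : core S (Sum.inr (e, q))
    · have hca : core S (Sum.inr (e, p)) := ⟨ha, attached_of_seg hcw.2 (seg_symm hs)⟩
      exact Or.inl ⟨core_adj hu hadj hca, hcw⟩
    · cases u with
      | inl x =>
        simp only [adj] at hadj
        obtain ⟨hp0, hx⟩ := hadj
        have hca : attached S (Sum.inr (e, p)) := by
          refine ⟨fun k hk => ?_, ?_⟩
          · have hk' : k.val ≤ p.val := hk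
            have : k = p := Fin.ext (by omega)
            rwa [this]
          · rcases hx with h | h <;> [left; right] <;> rw [← h] <;> exact hu
        exact absurd ⟨hs q (by omega) (by omega), attached_of_seg hca hs⟩ hcw
      | inr p' =>
        obtain ⟨f, p''⟩ := p'
        simp only [adj] at hadj
        obtain ⟨hef, hpp⟩ := hadj
        subst hef
        refine Or.inr ⟨f, p'', q, rfl, rfl, fun k h1 h2 => ?_⟩
        have hpp' : p''.val + 1 = p.val ∨ p.val + 1 = p''.val := hpp
        have h1' : min p''.val q.val ≤ k.val := h1
        have h2' : k.val ≤ max p''.val q.val := h2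
        rcases le_or_gt k.val (max p.val q.val) with h3 | h3
        · rcases le_or_gt (min p.val q.val) k.val with h4 | h4
          · exact hs k h4 h3
          · have : k = p'' := Fin.ext (by omega)
            rwa [this]
        · have : k = p'' := Fin.ext (by omega)
          rwa [this]

variable (S) in
/-- The induced subgraph. -/
abbrev IG : SimpleGraph S := (Gr n ℓ).induce S

lemma walk_linked {x y : ↥S} (p : (IG S).Walk x y) :
    linked S x.val y.val ∧ (Dfin S x.val y.val : ℕ∞) ≤ p.length := by
  induction p with
  | nil => exact ⟨linked_self (Subtype.mem _), by rw [dfin_self]; simp⟩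
  | @cons x b y h p ih =>
    have hadj : adj x.val b.val := h
    refine ⟨linked_step x.2 b.2 hadj ih.1, ?_⟩
    have h1 : Dfin S x.val y.val ≤ Dfin S b.val y.val + 1 := dfin_step x.2 b.2 hadj
    have h2 := ih.2
    rw [SimpleGraph.Walk.length_cons]
    push_cast
    calc (Dfin S x.val y.val : ℕ∞) ≤ (Dfin S b.val y.val : ℕ∞) + 1 := by
          exact_mod_cast h1
    _ ≤ (p.length : ℕ∞) + 1 := by exact add_le_add h2 le_rfl

lemma edist_le_of_adj {x y : ↥S} (h : adj x.val y.val) : (IG S).edist x y ≤ 1 := by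
  have h' : (IG S).Adj x y := h
  have := SimpleGraph.edist_le h'.toWalk
  simpa using this

lemma edist_col_le_aux (e : Pr n) : ∀ (d : ℕ) (i j : Fin ℓ), i.val + d = j.val →
    ∀ (hs : seg S e i j) (hi : Sum.inr (e, i) ∈ S) (hj : Sum.inr (e, j) ∈ S),
    (IG S).edist ⟨Sum.inr (e, i), hi⟩ ⟨Sum.inr (e, j), hj⟩ ≤ (d : ℕ∞) := by
  intro d
  induction d with
  | zero =>
    intro i j hij hs hi hj
    have : i = j := Fin.ext (by omega)
    subst this
    simp [SimpleGraph.edist_self]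
  | succ d ih =>
    intro i j hij hs hi hj
    have hjlt : i.val + d < ℓ := by omega
    have hmin : min i.val j.val = i.val := by omega
    have hmax : max i.val j.val = j.val := by omega
    have hj'S : Sum.inr (e, (⟨i.val + d, hjlt⟩ : Fin ℓ)) ∈ S := by
      apply hs ⟨i.val + d, hjlt⟩
      · show min i.val j.val ≤ i.val + d; omega
      · show i.val + d ≤ max i.val j.val; omega
    have hs' : seg S e i ⟨i.val + d, hjlt⟩ := by
      intro k h1 h2
      have h1' : min i.val (i.val + d) ≤ k.val := h1
      have h2' : k.val ≤ max i.val (i.val + d) := h2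
      exact hs k (by omega) (by omega)
    have step : (IG S).edist ⟨Sum.inr (e, (⟨i.val + d, hjlt⟩ : Fin ℓ)), hj'S⟩
        ⟨Sum.inr (e, j), hj⟩ ≤ 1 := by
      apply edist_le_of_adj
      exact ⟨rfl, Or.inl (show i.val + d + 1 = j.val by omega)⟩
    calc (IG S).edist ⟨Sum.inr (e, i), hi⟩ ⟨Sum.inr (e, j), hj⟩ ≤
        (IG S).edist ⟨Sum.inr (e, i), hi⟩ ⟨Sum.inr (e, (⟨i.val + d, hjlt⟩ : Fin ℓ)), hj'S⟩ +
        (IG S).edist ⟨Sum.inr (e, (⟨i.val + d, hjlt⟩ : Fin ℓ)), hj'S⟩ ⟨Sum.inr (e, j), hj⟩ :=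
          SimpleGraph.edist_triangle
    _ ≤ (d : ℕ∞) + 1 := add_le_add (ih i ⟨i.val + d, hjlt⟩ rfl hs' hi hj'S) step
    _ = ((d + 1 : ℕ) : ℕ∞) := by push_cast; ring

lemma edist_col_le {e : Pr n} {i j : Fin ℓ} (hs : seg S e i j)
    (hi : Sum.inr (e, i) ∈ S) (hj : Sum.inr (e, j) ∈ S) :
    (IG S).edist ⟨Sum.inr (e, i), hi⟩ ⟨Sum.inr (e, j), hj⟩ ≤ (Nat.dist i.val j.val : ℕ∞) := by
  rcases le_or_gt i.val j.val with h | h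
  · have hd : Nat.dist i.val j.val = j.val - i.val := by simp [Nat.dist]; omega
    rw [hd]
    exact edist_col_le_aux e (j.val - i.val) i j (by omega) hs hi hj
  · have hd : Nat.dist i.val j.val = i.val - j.val := by simp [Nat.dist]; omega
    rw [hd, SimpleGraph.edist_comm]
    exact edist_col_le_aux e (i.val - j.val) j i (by omega) (seg_symm hs) hj hi

lemma edist_to_tip {u : Vt n ℓ} (hu : u ∈ S) (hatt : attached S u) {t : Fin n}
    (ht : hasTip u t) (htS : Sum.inl t ∈ S) :
    (IG S).edist ⟨u, hu⟩ ⟨Sum.inl t, htS⟩ ≤ (dep u : ℕ∞) := by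
  cases u with
  | inl x =>
    have : t = x := ht
    subst this
    simp [SimpleGraph.edist_self, dep]
  | inr p =>
    obtain ⟨e, i⟩ := p
    have hl0 : 0 < ℓ := i.pos
    have hpre : ∀ k : Fin ℓ, k.val ≤ i.val → Sum.inr (e, k) ∈ S := hatt.1
    have hzS : Sum.inr (e, (⟨0, hl0⟩ : Fin ℓ)) ∈ S := hpre ⟨0, hl0⟩ (Nat.zero_le _)
    have hseg : seg S e i ⟨0, hl0⟩ := by
      intro k h1 h2
      have h2' : k.val ≤ max i.val 0 := h2
      exact hpre k (by omega)
    have h1 : (IG S).edist ⟨Sum.inr (e, i), hu⟩ ⟨Sum.inr (e, (⟨0, hl0⟩ : Fin ℓ)), hzS⟩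
        ≤ (i.val : ℕ∞) := by
      have := edist_col_le hseg hu hzS
      have hd : Nat.dist i.val (0 : ℕ) = i.val := by simp [Nat.dist]
      rwa [show ((⟨0, hl0⟩ : Fin ℓ) : ℕ) = 0 from rfl, hd] at this
    have step : (IG S).edist ⟨Sum.inr (e, (⟨0, hl0⟩ : Fin ℓ)), hzS⟩ ⟨Sum.inl t, htS⟩ ≤ 1 := by
      apply edist_le_of_adj
      exact ⟨rfl, ht⟩
    calc (IG S).edist ⟨Sum.inr (e, i), hu⟩ ⟨Sum.inl t, htS⟩ ≤
        (IG S).edist ⟨Sum.inr (e, i), hu⟩ ⟨Sum.inr (e, (⟨0, hl0⟩ : Fin ℓ)), hzS⟩ +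
        (IG S).edist ⟨Sum.inr (e, (⟨0, hl0⟩ : Fin ℓ)), hzS⟩ ⟨Sum.inl t, htS⟩ :=
          SimpleGraph.edist_triangle
    _ ≤ (i.val : ℕ∞) + 1 := add_le_add h1 step
    _ = ((i.val + 1 : ℕ) : ℕ∞) := by push_cast; ring
    _ = (dep (Sum.inr (e, i) : Vt n ℓ) : ℕ∞) := rfl

lemma core_anchor {u : Vt n ℓ} (hc : core S u) : ∃ t, hasTip u t ∧ Sum.inl t ∈ S := by
  cases u with
  | inl x => exact ⟨x, rfl, hc.1⟩
  | inr p =>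
    rcases hc.2.2 with h | h
    · exact ⟨p.1.val.1, Or.inl rfl, h⟩
    · exact ⟨p.1.val.2, Or.inr rfl, h⟩

lemma edist_le_dfin {u w : Vt n ℓ} (hu : u ∈ S) (hw : w ∈ S) (hl : linked S u w) :
    (IG S).edist ⟨u, hu⟩ ⟨w, hw⟩ ≤ (Dfin S u w : ℕ∞) := by
  rcases hl with ⟨hcu, hcw⟩ | ⟨e, i, j, rfl, rfl, hs⟩
  · by_cases hb : br u = br w
    · cases u with
      | inl x =>
        have : w = Sum.inl x := br_eq_inl hb.symm
        subst this
        simp [SimpleGraph.edist_self]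
      | inr p =>
        obtain ⟨e, i⟩ := p
        obtain ⟨j, rfl⟩ := br_inr_eq hb.symm
        have hseg : seg S e i j := seg_of_attached hcu.2 hcw.2
        have := edist_col_le hseg hu hw
        rw [dfin_brEq hb]
        have hdep : Nat.dist (dep (Sum.inr (e, i) : Vt n ℓ)) (dep (Sum.inr (e, j) : Vt n ℓ))
            = Nat.dist i.val j.val := by
          simp only [dep, Nat.dist]; omega
        rwa [hdep]
    · rw [dfin_crossEq hb]
      by_cases hsh : shares S u w
      · obtain ⟨t, h1, h2, h3⟩ := hsh
        have e1 := edist_to_tip hu hcu.2 h1 h3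
        have e2 := edist_to_tip hw hcw.2 h2 h3
        rw [if_pos ⟨t, h1, h2, h3⟩]
        calc (IG S).edist ⟨u, hu⟩ ⟨w, hw⟩ ≤
            (IG S).edist ⟨u, hu⟩ ⟨Sum.inl t, h3⟩ + (IG S).edist ⟨Sum.inl t, h3⟩ ⟨w, hw⟩ :=
              SimpleGraph.edist_triangle
        _ ≤ (dep u : ℕ∞) + (dep w : ℕ∞) := by
            refine add_le_add e1 ?_
            rw [SimpleGraph.edist_comm]
            exact e2
        _ = ((dep u + dep w + 1 - 1 : ℕ) : ℕ∞) := by push_cast; ring_nf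
      · obtain ⟨t1, ht1, ht1S⟩ := core_anchor hcu
        obtain ⟨t2, ht2, ht2S⟩ := core_anchor hcw
        have hne : t1 ≠ t2 := fun hh => hsh ⟨t1, ht1, by rw [hh]; exact ht2, ht1S⟩
        have e1 := edist_to_tip hu hcu.2 ht1 ht1S
        have e2 := edist_to_tip hw hcw.2 ht2 ht2S
        have emid : (IG S).edist ⟨Sum.inl t1, ht1S⟩ ⟨Sum.inl t2, ht2S⟩ ≤ 1 :=
          edist_le_of_adj hne
        rw [if_neg hsh]
        calc (IG S).edist ⟨u, hu⟩ ⟨w, hw⟩ ≤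
            (IG S).edist ⟨u, hu⟩ ⟨Sum.inl t1, ht1S⟩ +
            (IG S).edist ⟨Sum.inl t1, ht1S⟩ ⟨w, hw⟩ := SimpleGraph.edist_triangle
        _ ≤ (dep u : ℕ∞) + ((IG S).edist ⟨Sum.inl t1, ht1S⟩ ⟨Sum.inl t2, ht2S⟩ +
            (IG S).edist ⟨Sum.inl t2, ht2S⟩ ⟨w, hw⟩) :=
              add_le_add e1 SimpleGraph.edist_triangle
        _ ≤ (dep u : ℕ∞) + (1 + (dep w : ℕ∞)) := by
            refine add_le_add le_rfl (add_le_add emid ?_)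
            rw [SimpleGraph.edist_comm]
            exact e2
        _ = ((dep u + dep w + 1 - 0 : ℕ) : ℕ∞) := by push_cast; ring_nf
  · have := edist_col_le hs hu hw
    rw [dfin_brEq (show br (Sum.inr (e, i) : Vt n ℓ) = br (Sum.inr (e, j)) from rfl)]
    have hdep : Nat.dist (dep (Sum.inr (e, i) : Vt n ℓ)) (dep (Sum.inr (e, j) : Vt n ℓ))
        = Nat.dist i.val j.val := by
      simp only [dep, Nat.dist]; omega
    rwa [hdep]

/-- The metric theorem: distances in an arbitrary induced subgraph. -/
theorem edist_eq {u w : Vt n ℓ} (hu : u ∈ S) (hw : w ∈ S) :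
    (IG S).edist ⟨u, hu⟩ ⟨w, hw⟩ =
      if linked S u w then (Dfin S u w : ℕ∞) else ⊤ := by
  split_ifs with hl
  · refine le_antisymm (edist_le_dfin hu hw hl) ?_
    rcases eq_or_ne ((IG S).edist ⟨u, hu⟩ ⟨w, hw⟩) ⊤ with h | h
    · rw [h]; exact le_top
    · obtain ⟨p, hp⟩ := SimpleGraph.exists_walk_of_edist_ne_top h
      rw [← hp]
      exact (walk_linked p).2
  · apply SimpleGraph.edist_eq_top_of_not_reachable
    intro hr
    obtain ⟨p⟩ := hr
    exact hl (walk_linked p).1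

theorem edist_eq' (v w : ↥S) :
    (IG S).edist v w = if linked S v.val w.val then (Dfin S v.val w.val : ℕ∞) else ⊤ := by
  obtain ⟨u, hu⟩ := v; obtain ⟨w', hw⟩ := w
  exact edist_eq hu hw

lemma mem_gball_iff {v w : ↥S} {r : ℕ} :
    w ∈ gball (IG S) v r ↔ linked S v.val w.val ∧ Dfin S v.val w.val ≤ r := by
  unfold gball
  simp only [Set.mem_setOf_eq, edist_eq']
  split_ifs with hl
  · rw [Nat.cast_le]
    exact ⟨fun h => ⟨hl, h⟩, fun h => h.2⟩
  · simp only [top_le_iff]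
    constructor
    · intro h; exact absurd h (by simp)
    · rintro ⟨h, -⟩; exact absurd h hl

lemma core_of_linked {u w : Vt n ℓ} (hl : linked S u w) (hw : core S w) : core S u := by
  rcases hl with ⟨h1, _⟩ | ⟨e, i, j, rfl, rfl, hs⟩
  · exact h1
  · exact ⟨hs i (by omega) (by omega), attached_of_seg hw.2 (seg_symm hs)⟩

lemma F1 {v w : ↥S} {r : ℕ} (hcv : core S v.val) (hcw : core S w.val)
    (hb : br v.val ≠ br w.val) (h : dep v.val + dep w.val + 1 ≤ r) :
    w ∈ gball (IG S) v r := by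
  rw [mem_gball_iff]
  refine ⟨Or.inl ⟨hcv, hcw⟩, ?_⟩
  rw [dfin_crossEq hb]
  omega

lemma F1' {v w : ↥S} {r : ℕ} (hcv : core S v.val) (hcw : core S w.val)
    (hb : br v.val ≠ br w.val) (hsh : shares S v.val w.val)
    (h : dep v.val + dep w.val ≤ r) : w ∈ gball (IG S) v r := by
  rw [mem_gball_iff]
  refine ⟨Or.inl ⟨hcv, hcw⟩, ?_⟩
  rw [dfin_crossEq hb, if_pos hsh]
  omega

lemma F2 {v w : ↥S} {r : ℕ} (h : w ∈ gball (IG S) v r) (hb : br v.val ≠ br w.val) :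
    dep v.val + dep w.val ≤ r := by
  rw [mem_gball_iff] at h
  have h2 := h.2
  rw [dfin_crossEq hb] at h2
  have := sigma_le_one (S := S) v.val w.val
  omega

lemma F3 {v w : ↥S} {r : ℕ} (h : w ∈ gball (IG S) v r) (hb : br v.val ≠ br w.val)
    (hr : r ≤ dep v.val + dep w.val) : shares S v.val w.val := by
  rw [mem_gball_iff] at h
  have h2 := h.2
  rw [dfin_crossEq hb] at h2
  by_contra hsh
  rw [if_neg hsh] at h2
  omega

lemma linked_col_seg {e : Pr n} {p j : Fin ℓ}
    (hl : linked S (Sum.inr (e, p)) (Sum.inr (e, j))) : seg S e p j := by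
  rcases hl with ⟨h1, h2⟩ | ⟨e', i', j', hu, hw, hs⟩
  · exact seg_of_attached h1.2 h2.2
  · simp only [Sum.inr.injEq, Prod.mk.injEq] at hu hw
    obtain ⟨he1, hp⟩ := hu; obtain ⟨he2, hj⟩ := hw
    subst he1; subst hp; subst hj
    exact hs

lemma tips_determine {e : Pr n} {q : Fin ℓ} {t s : Fin n}
    (ht : hasTip (Sum.inr (e, q) : Vt n ℓ) t) (hs : hasTip (Sum.inr (e, q) : Vt n ℓ) s)
    (hne : t ≠ s) : (e.val = (t, s) ∧ t < s) ∨ (e.val = (s, t) ∧ s < t) := by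
  have hlt := e.property
  rcases ht with h1 | h1 <;> rcases hs with h2 | h2
  · exact absurd (h1.trans h2.symm) hne
  · left
    constructor
    · rw [Prod.ext_iff]; exact ⟨h1.symm, h2.symm⟩
    · rw [h1, h2]; exact hlt
  · right
    constructor
    · rw [Prod.ext_iff]; exact ⟨h2.symm, h1.symm⟩
    · rw [h2, h1]; exact hlt
  · exact absurd (h1.trans h2.symm) hne

lemma dep_lt_inr {u : Vt n ℓ} {lam : ℕ} (h : dep u = lam) (hpos : 0 < lam) :
    ∃ (e : Pr n) (q : Fin ℓ), u = Sum.inr (e, q) ∧ q.val + 1 = lam := by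
  cases u with
  | inl x => exact absurd h.symm (by simp [dep]; omega)
  | inr p => exact ⟨p.1, p.2, by simp, h⟩

lemma dep_zero_inl {u : Vt n ℓ} (h : dep u = 0) : ∃ x, u = Sum.inl x := by
  cases u with
  | inl x => exact ⟨x, rfl⟩
  | inr p => simp [dep] at h

lemma dfin_col (e : Pr n) (i j : Fin ℓ) :
    Dfin S (Sum.inr (e, i)) (Sum.inr (e, j)) = Nat.dist i.val j.val := by
  rw [dfin_brEq (show br (Sum.inr (e, i) : Vt n ℓ) = br (Sum.inr (e, j)) from rfl)]
  simp only [dep, Nat.dist]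
  omega

lemma col_three {X : Set ↥S} (hSh : BShattered (IG S) X) {e : Pr n} {w1 w2 w3 : ↥S}
    (h1 : w1 ∈ X) (h2 : w2 ∈ X) (h3 : w3 ∈ X) {j1 j2 j3 : Fin ℓ}
    (e1 : w1.val = Sum.inr (e, j1)) (e2 : w2.val = Sum.inr (e, j2))
    (e3 : w3.val = Sum.inr (e, j3))
    (h12 : j1.val < j2.val) (h23 : j2.val < j3.val) : False := by
  obtain ⟨v, r, hT⟩ := hSh {w1, w3} (by
    intro z hz
    rcases hz with rfl | rfl
    exacts [h1, h3])
  have hm1 : w1 ∈ gball (IG S) v r := ((Set.ext_iff.mp hT w1).mpr (by simp)).1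
  have hm3 : w3 ∈ gball (IG S) v r := ((Set.ext_iff.mp hT w3).mpr (by simp)).1
  rw [mem_gball_iff] at hm1 hm3
  have hw2ball : w2 ∈ gball (IG S) v r := by
    rw [mem_gball_iff]
    by_cases hbv : br v.val = Sum.inr e
    · obtain ⟨p, hv⟩ := br_inr_eq hbv
      have hs1 : seg S e p j1 := linked_col_seg (by rw [← hv, ← e1]; exact hm1.1)
      have hs3 : seg S e p j3 := linked_col_seg (by rw [← hv, ← e3]; exact hm3.1)
      have hs2 : seg S e p j2 := by
        intro k hk1 hk2
        have hk1' : min p.val j2.val ≤ k.val := hk1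
        have hk2' : k.val ≤ max p.val j2.val := hk2
        rcases le_or_gt k.val p.val with h | h
        · exact hs1 k (by omega) (by omega)
        · exact hs3 k (by omega) (by omega)
      have hd1 := hm1.2
      have hd3 := hm3.2
      rw [hv, e1, dfin_col] at hd1
      rw [hv, e3, dfin_col] at hd3
      constructor
      · rw [hv, e2]; exact Or.inr ⟨e, p, j2, rfl, rfl, hs2⟩
      · rw [hv, e2, dfin_col]
        simp only [Nat.dist] at hd1 hd3 ⊢
        omega
    · have hb1 : br v.val ≠ br w1.val := by rw [e1]; exact hbv
      have hb2 : br v.val ≠ br w2.val := by rw [e2]; exact hbv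
      have hb3 : br v.val ≠ br w3.val := by rw [e3]; exact hbv
      have hcc1 : core S v.val ∧ core S w1.val := by
        rcases hm1.1 with h | ⟨e', i', j', hveq, hweq, -⟩
        · exact h
        · exfalso
          apply hbv
          rw [hweq] at e1
          simp only [Sum.inr.injEq, Prod.mk.injEq] at e1
          rw [hveq]
          simp [br, e1.1]
      have hcc3 : core S v.val ∧ core S w3.val := by
        rcases hm3.1 with h | ⟨e', i', j', hveq, hweq, -⟩
        · exact h
        · exfalso
          apply hbv
          rw [hweq] at e3
          simp only [Sum.inr.injEq, Prod.mk.injEq] at e3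
          rw [hveq]
          simp [br, e3.1]
      have hatt3 : attached S (Sum.inr (e, j3)) := by rw [← e3]; exact hcc3.2.2
      have hpre3 : ∀ k : Fin ℓ, k.val ≤ j3.val → Sum.inr (e, k) ∈ S := hatt3.1
      have hatt2 : attached S (Sum.inr (e, j2)) := by
        refine ⟨fun k hk => ?_, hatt3.2⟩
        have hk' : k.val ≤ j2.val := hk
        exact hpre3 k (by omega)
      have hcw2 : core S w2.val := by rw [e2]; exact ⟨by rw [← e2]; exact w2.2, hatt2⟩
      refine ⟨Or.inl ⟨hcc1.1, hcw2⟩, ?_⟩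
      have hd3 := hm3.2
      rw [dfin_crossEq hb3] at hd3
      rw [dfin_crossEq hb2]
      have hbr23 : br w2.val = br w3.val := by rw [e2, e3]; rfl
      by_cases hsh : shares S v.val w2.val
      · rw [if_pos hsh]
        rw [if_pos ((shares_congr hbr23).mp hsh)] at hd3
        rw [e2]; rw [e3] at hd3
        simp only [dep] at hd3 ⊢
        omega
      · rw [if_neg hsh]
        rw [if_neg (fun hh => hsh ((shares_congr hbr23).mpr hh))] at hd3
        rw [e2]; rw [e3] at hd3
        simp only [dep] at hd3 ⊢
        omega
  have hw2 : w2 ∈ ({w1, w3} : Set ↥S) := (Set.ext_iff.mp hT w2).mp ⟨hw2ball, h2⟩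
  rcases hw2 with h | h
  · rw [h, e1] at e2
    simp only [Sum.inr.injEq, Prod.mk.injEq] at e2
    have := e2.2
    omega
  · rw [h, e3] at e2
    simp only [Sum.inr.injEq, Prod.mk.injEq] at e2
    have := e2.2
    omega

lemma no_three_in_col {X : Set ↥S} (hSh : BShattered (IG S) X) {e : Pr n} {A : Set ↥S}
    (hAX : A ⊆ X) (hcol : ∀ w ∈ A, ∃ j, w.val = Sum.inr (e, j)) (h3 : 3 ≤ A.ncard) :
    False := by
  obtain ⟨B, hBA, hB⟩ := Set.exists_subset_card_eq h3
  obtain ⟨a, b, c, hab, hac, hbc, rfl⟩ := Set.ncard_eq_three.mp hB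
  obtain ⟨ja, ea⟩ := hcol a (hBA (by simp))
  obtain ⟨jb, eb⟩ := hcol b (hBA (by simp))
  obtain ⟨jc, ec⟩ := hcol c (hBA (by simp))
  have ha : a ∈ X := hAX (hBA (by simp))
  have hb : b ∈ X := hAX (hBA (by simp))
  have hc : c ∈ X := hAX (hBA (by simp))
  have hjab : ja.val ≠ jb.val := by
    intro h
    apply hab
    apply Subtype.ext
    rw [ea, eb]
    simp [Fin.ext_iff, h]
  have hjac : ja.val ≠ jc.val := by
    intro h
    apply hac
    apply Subtype.ext
    rw [ea, ec]
    simp [Fin.ext_iff, h]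
  have hjbc : jb.val ≠ jc.val := by
    intro h
    apply hbc
    apply Subtype.ext
    rw [eb, ec]
    simp [Fin.ext_iff, h]
  rcases lt_trichotomy ja.val jb.val with h1 | h1 | h1 <;>
    rcases lt_trichotomy jb.val jc.val with h2 | h2 | h2 <;>
    rcases lt_trichotomy ja.val jc.val with h3' | h3' | h3' <;>
    first
      | omega
      | exact col_three hSh ha hb hc ea eb ec (by omega) (by omega)
      | exact col_three hSh ha hc hb ea ec eb (by omega) (by omega)
      | exact col_three hSh hb ha hc eb ea ec (by omega) (by omega)
      | exact col_three hSh hb hc ha eb ec ea (by omega) (by omega)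
      | exact col_three hSh hc ha hb ec ea eb (by omega) (by omega)
      | exact col_three hSh hc hb ha ec eb ea (by omega) (by omega)

lemma branch_bound {X : Set ↥S} (hSh : BShattered (IG S) X) (b : Fin n ⊕ Pr n) :
    ({w ∈ X | br w.val = b}).ncard ≤ 2 := by
  by_contra hcon
  push_neg at hcon
  have h3 : 3 ≤ ({w ∈ X | br w.val = b}).ncard := hcon
  cases b with
  | inl x =>
    obtain ⟨B, hBA, hB⟩ := Set.exists_subset_card_eq h3
    obtain ⟨a, c, _, hab, -, -, rfl⟩ := Set.ncard_eq_three.mp hB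
    apply hab
    apply Subtype.ext
    rw [br_eq_inl (hBA (by simp : a ∈ ({a, c, _} : Set ↥S))).2,
      br_eq_inl (hBA (by simp : c ∈ ({a, c, _} : Set ↥S))).2]
  | inr e =>
    exact no_three_in_col hSh (fun w hw => hw.1)
      (fun w hw => br_inr_eq hw.2) h3

lemma X_core {X : Set ↥S} (hSh : BShattered (IG S) X) (h3 : 3 ≤ X.ncard) :
    ∀ w ∈ X, core S w.val := by
  by_contra hcon
  push_neg at hcon
  obtain ⟨xs, hxs, hxsnc⟩ := hcon
  obtain ⟨v, r, hT⟩ := hSh X le_rfl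
  have hball : ∀ y ∈ X, y ∈ gball (IG S) v r :=
    fun y hy => ((Set.ext_iff.mp hT y).mpr hy).1
  have hlxs := (mem_gball_iff.mp (hball xs hxs)).1
  rcases hlxs with ⟨-, h⟩ | ⟨e, p, q, hv, hxv, hs⟩
  · exact hxsnc h
  · -- all of X is in column e
    have hvnc : ¬ attached S v.val := by
      intro hatt
      rw [hv] at hatt
      exact hxsnc (by rw [hxv]; exact ⟨by rw [← hxv]; exact xs.2, attached_of_seg hatt hs⟩)
    have hcol : ∀ w ∈ X, ∃ j, w.val = Sum.inr (e, j) := by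
      intro w hw
      have hl := (mem_gball_iff.mp (hball w hw)).1
      rcases hl with ⟨hcv, -⟩ | ⟨e', p', q', hv', hw', -⟩
      · exact absurd hcv.2 hvnc
      · rw [hv] at hv'
        simp only [Sum.inr.injEq, Prod.mk.injEq] at hv'
        exact ⟨q', by rw [hw', hv'.1]⟩
    exact no_three_in_col hSh le_rfl hcol h3

theorem vc18 : distVCdimLE (Gr n ℓ) 18 := by
  intro S X hSh
  by_contra hcon
  push_neg at hcon
  have h19 : 19 ≤ X.ncard := hcon
  have hcore : ∀ w ∈ X, core S w.val := X_core hSh (by omega)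
  have hbb : ∀ b, ({w ∈ X | br w.val = b}).ncard ≤ 2 := branch_bound hSh
  have hdep_le : ∀ u : Vt n ℓ, dep u ≤ ℓ := by
    intro u
    cases u with
    | inl x => simp [dep]
    | inr p => have := p.2.isLt; simp only [dep]; omega
  -- the level threshold
  have hP : ∃ lam, 3 ≤ ({w ∈ X | dep w.val ≤ lam}).ncard := by
    refine ⟨ℓ, ?_⟩
    have : {w ∈ X | dep w.val ≤ ℓ} = X := by
      ext w
      exact ⟨fun h => h.1, fun h => ⟨h, hdep_le w.val⟩⟩
    rw [this]
    omega
  set lstar := Nat.find hP with hlstar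
  have hPl : 3 ≤ ({w ∈ X | dep w.val ≤ lstar}).ncard := Nat.find_spec hP
  have hmin : ∀ m, m < lstar → ({w ∈ X | dep w.val ≤ m}).ncard < 3 := by
    intro m hm
    have := Nat.find_min hP hm
    omega
  -- step 2
  have hstep2 : ∀ lam : ℕ, 3 ≤ ({w ∈ X | dep w.val ≤ lam}).ncard →
      (X \ {w ∈ X | dep w.val ≤ lam}).ncard ≤ 2 := by
    intro lam hle
    obtain ⟨v, r, hT⟩ := hSh (X \ {w ∈ X | dep w.val ≤ lam}) Set.diff_subset
    have hsub : (X \ {w ∈ X | dep w.val ≤ lam}) ⊆ {w ∈ X | br w.val = br v.val} := by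
      intro y hy
      refine ⟨hy.1, ?_⟩
      by_contra hbne
      have hyb : y ∈ gball (IG S) v r := ((Set.ext_iff.mp hT y).mpr hy).1
      have hF2 : dep v.val + dep y.val ≤ r := F2 hyb (fun hh => hbne hh.symm)
      have hW : ¬ ({w ∈ X | dep w.val ≤ lam} ⊆ {w ∈ X | br w.val = br v.val}) := by
        intro hsubs
        have h1 := Set.ncard_le_ncard hsubs (Set.toFinite _)
        have h2 := hbb (br v.val)
        omega
      obtain ⟨w0, hw0le, hw0nb⟩ := Set.not_subset.mp hW
      have hw0X : w0 ∈ X := hw0le.1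
      have hbrne : br v.val ≠ br w0.val := fun hh => hw0nb ⟨hw0X, hh.symm⟩
      have hdy : lam < dep y.val := by
        by_contra hh
        exact hy.2 ⟨hy.1, by omega⟩
      have hcv : core S v.val := core_of_linked (mem_gball_iff.mp hyb).1 (hcore y hy.1)
      have hmem : w0 ∈ gball (IG S) v r :=
        F1 hcv (hcore w0 hw0X) hbrne (by have := hw0le.2; omega)
      have hbad : w0 ∈ X \ {w ∈ X | dep w.val ≤ lam} :=
        (Set.ext_iff.mp hT w0).mp ⟨hmem, hw0X⟩
      exact hbad.2 hw0le
    calc (X \ {w ∈ X | dep w.val ≤ lam}).ncard ≤ _ :=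
        Set.ncard_le_ncard hsub (Set.toFinite _)
    _ ≤ 2 := hbb _
  have hhigh : (X \ {w ∈ X | dep w.val ≤ lstar}).ncard ≤ 2 := hstep2 lstar hPl
  have hlow : ({w ∈ X | dep w.val < lstar}).ncard ≤ 2 := by
    rcases Nat.eq_zero_or_pos lstar with h0 | hpos
    · have : {w ∈ X | dep w.val < lstar} = ∅ := by
        ext w; simp [h0]
      rw [this]; simp
    · have heq : {w ∈ X | dep w.val < lstar} = {w ∈ X | dep w.val ≤ lstar - 1} := by
        ext w
        exact ⟨fun h => ⟨h.1, by have := h.2; omega⟩, fun h => ⟨h.1, by have := h.2; omega⟩⟩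
      rw [heq]
      have := hmin (lstar - 1) (by omega)
      omega
  set L := {w ∈ X | dep w.val = lstar} with hLdef
  have hLX : L ⊆ X := Set.sep_subset _ _
  have hL15 : 15 ≤ L.ncard := by
    have hsplit : X ⊆ ({w ∈ X | dep w.val < lstar} ∪ L) ∪
        (X \ {w ∈ X | dep w.val ≤ lstar}) := by
      intro w hw
      rcases lt_trichotomy (dep w.val) lstar with h | h | h
      · exact Or.inl (Or.inl ⟨hw, h⟩)
      · exact Or.inl (Or.inr ⟨hw, h⟩)
      · exact Or.inr ⟨hw, fun hh => by have := hh.2; omega⟩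
    have h1 := Set.ncard_le_ncard hsplit (Set.toFinite _)
    have h2 := Set.ncard_union_le ({w ∈ X | dep w.val < lstar} ∪ L)
      (X \ {w ∈ X | dep w.val ≤ lstar})
    have h3 := Set.ncard_union_le {w ∈ X | dep w.val < lstar} L
    omega
  -- branch-level subsingleton bound
  have hlb : ∀ bv, ({w ∈ X | dep w.val = lstar ∧ br w.val = bv}).ncard ≤ 1 := by
    intro bv
    rw [Set.ncard_le_one (Set.toFinite _)]
    rintro a ⟨-, ha1, ha2⟩ b ⟨-, hb1, hb2⟩
    exact Subtype.ext (eq_of_br_dep (ha2.trans hb2.symm) (by omega))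
  -- the "far" case
  have hgt_case : ∀ (Y : Set ↥S) (v : ↥S) (r : ℕ), Y ⊆ X →
      gball (IG S) v r ∩ X = Y → core S v.val → dep v.val + lstar + 1 ≤ r →
      13 ≤ Y.ncard := by
    intro Y v r hYX hT hcv hr
    have hsub : L \ {w ∈ X | br w.val = br v.val} ⊆ Y := by
      rintro w ⟨hwL, hwnb⟩
      have hbrne : br v.val ≠ br w.val := fun hh => hwnb ⟨hwL.1, hh.symm⟩
      have hmem : w ∈ gball (IG S) v r :=
        F1 hcv (hcore w hwL.1) hbrne (by have := hwL.2; omega)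
      exact (Set.ext_iff.mp hT w).mp ⟨hmem, hwL.1⟩
    have h1 : L ⊆ (L \ {w ∈ X | br w.val = br v.val}) ∪ {w ∈ X | br w.val = br v.val} := by
      intro w hw
      by_cases hb : w ∈ {w ∈ X | br w.val = br v.val}
      · exact Or.inr hb
      · exact Or.inl ⟨hw, hb⟩
    have h2 := Set.ncard_le_ncard h1 (Set.toFinite _)
    have h3 := Set.ncard_union_le (L \ {w ∈ X | br w.val = br v.val})
      {w ∈ X | br w.val = br v.val}
    have h4 := hbb (br v.val)
    have h5 := Set.ncard_le_ncard hsub (Set.toFinite _)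
    omega
  -- the "near" case
  have hlt_case : ∀ (Y : Set ↥S) (v : ↥S) (r : ℕ), Y ⊆ L →
      gball (IG S) v r ∩ X = Y → r < dep v.val + lstar → Y.ncard ≤ 1 := by
    intro Y v r hYL hT hr
    have hsub : Y ⊆ {w ∈ X | dep w.val = lstar ∧ br w.val = br v.val} := by
      intro y hy
      have hyL := hYL hy
      refine ⟨hyL.1, hyL.2, ?_⟩
      by_contra hbne
      have hyb : y ∈ gball (IG S) v r := ((Set.ext_iff.mp hT y).mpr hy).1
      have := F2 hyb (fun hh => hbne hh.symm)
      have := hyL.2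
      omega
    have := Set.ncard_le_ncard hsub (Set.toFinite _)
    have := hlb (br v.val)
    omega
  -- stars are small
  have hstar5 : ∀ t : Fin n,
      ({w ∈ X | dep w.val = lstar ∧ hasTip w.val t ∧ Sum.inl t ∈ S}).ncard ≤ 5 := by
    intro t
    by_contra hcon6
    push_neg at hcon6
    have h6 : 6 ≤ ({w ∈ X | dep w.val = lstar ∧ hasTip w.val t ∧ Sum.inl t ∈ S}).ncard :=
      hcon6
    set SK := {w ∈ X | dep w.val = lstar ∧ hasTip w.val t ∧ Sum.inl t ∈ S} with hSK
    have hSKX : SK ⊆ X := Set.sep_subset _ _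
    have hSKL : SK ⊆ L := fun w hw => ⟨hw.1, hw.2.1⟩
    rcases Nat.eq_zero_or_pos lstar with h0 | hpos
    · have : SK.ncard ≤ 1 := by
        rw [Set.ncard_le_one (Set.toFinite _)]
        rintro a ⟨-, ha1, ha2, -⟩ b ⟨-, hb1, hb2, -⟩
        obtain ⟨xa, hxa⟩ := dep_zero_inl (by omega : dep a.val = 0)
        obtain ⟨xb, hxb⟩ := dep_zero_inl (by omega : dep b.val = 0)
        rw [hxa] at ha2; rw [hxb] at hb2
        have h1 : t = xa := ha2
        have h2 : t = xb := hb2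
        apply Subtype.ext
        rw [hxa, hxb, ← h1, ← h2]
      omega
    · obtain ⟨Y, hYSK, hY4⟩ := Set.exists_subset_card_eq (show 4 ≤ SK.ncard by omega)
      obtain ⟨v, r, hT⟩ := hSh Y (hYSK.trans hSKX)
      obtain ⟨y0, hy0⟩ := Set.nonempty_of_ncard_ne_zero (by omega : Y.ncard ≠ 0)
      have hy0b : y0 ∈ gball (IG S) v r := ((Set.ext_iff.mp hT y0).mpr hy0).1
      have hcv : core S v.val :=
        core_of_linked (mem_gball_iff.mp hy0b).1 (hcore y0 (hYSK.trans hSKX hy0))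
      rcases lt_trichotomy r (dep v.val + lstar) with hr | hr | hr
      · have := hlt_case Y v r (hYSK.trans hSKL) hT hr
        omega
      · -- the equality case
        have hYmB : 3 ≤ (Y \ {w ∈ X | dep w.val = lstar ∧ br w.val = br v.val}).ncard := by
          have h1 : Y ⊆ (Y \ {w ∈ X | dep w.val = lstar ∧ br w.val = br v.val}) ∪
              {w ∈ X | dep w.val = lstar ∧ br w.val = br v.val} := by
            intro w hw
            by_cases hb : w ∈ {w ∈ X | dep w.val = lstar ∧ br w.val = br v.val}
            · exact Or.inr hb
            · exact Or.inl ⟨hw, hb⟩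
          have h2 := Set.ncard_le_ncard h1 (Set.toFinite _)
          have h3 := Set.ncard_union_le
            (Y \ {w ∈ X | dep w.val = lstar ∧ br w.val = br v.val})
            {w ∈ X | dep w.val = lstar ∧ br w.val = br v.val}
          have h4 := hlb (br v.val)
          omega
        by_cases hvt : hasTip v.val t
        · -- SK minus v's branch is contained in Y, too big
          have hsub : SK \ {w : ↥S | br w.val = br v.val} ⊆ Y := by
            rintro w ⟨hwSK, hwnb⟩
            have hbrne : br v.val ≠ br w.val := fun hh => hwnb hh.symm
            have hmem : w ∈ gball (IG S) v r :=
              F1' hcv (hcore w (hSKX hwSK)) hbrne ⟨t, hvt, hwSK.2.2.1, hwSK.2.2.2⟩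
                (by have := hwSK.2.1; omega)
            exact (Set.ext_iff.mp hT w).mp ⟨hmem, hSKX hwSK⟩
          have h1 : SK ⊆ (SK \ {w : ↥S | br w.val = br v.val}) ∪
              {w ∈ X | dep w.val = lstar ∧ br w.val = br v.val} := by
            intro w hw
            by_cases hb : br w.val = br v.val
            · exact Or.inr ⟨hw.1, hw.2.1, hb⟩
            · exact Or.inl ⟨hw, hb⟩
          have h2 := Set.ncard_le_ncard h1 (Set.toFinite _)
          have h3 := Set.ncard_union_le (SK \ {w : ↥S | br w.val = br v.val})
            {w ∈ X | dep w.val = lstar ∧ br w.val = br v.val}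
          have h4 := hlb (br v.val)
          have h5 := Set.ncard_le_ncard hsub (Set.toFinite _)
          omega
        · -- three shared tips, pigeonhole
          obtain ⟨B3, hB3, hB3c⟩ := Set.exists_subset_card_eq hYmB
          obtain ⟨y1, y2, y3, h12, h13, h23, rfl⟩ := Set.ncard_eq_three.mp hB3c
          have hget : ∀ y ∈ ({y1, y2, y3} : Set ↥S), ∃ (ey : Pr n) (qy : Fin ℓ)
              (sy : Fin n), y.val = Sum.inr (ey, qy) ∧ qy.val + 1 = lstar ∧
              hasTip y.val t ∧ hasTip v.val sy ∧ sy ≠ t ∧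
              ((ey.val = (t, sy) ∧ t < sy) ∨ (ey.val = (sy, t) ∧ sy < t)) := by
            intro y hy
            have hyY : y ∈ Y := (hB3 hy).1
            have hynb : ¬ (y ∈ {w ∈ X | dep w.val = lstar ∧ br w.val = br v.val}) :=
              (hB3 hy).2
            have hySK : y ∈ SK := hYSK hyY
            have hbrne : br v.val ≠ br y.val := by
              intro hh
              exact hynb ⟨hySK.1, hySK.2.1, hh.symm⟩
            have hyb : y ∈ gball (IG S) v r := ((Set.ext_iff.mp hT y).mpr hyY).1
            have hsh : shares S v.val y.val :=
              F3 hyb hbrne (by have := hySK.2.1; omega)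
            obtain ⟨sy, hsv, hsy, hsS⟩ := hsh
            obtain ⟨ey, qy, hey, hq⟩ := dep_lt_inr hySK.2.1 hpos
            have hsnet : sy ≠ t := by
              intro hh
              rw [hh] at hsv
              exact hvt hsv
            have htipt : hasTip y.val t := hySK.2.2.1
            refine ⟨ey, qy, sy, hey, hq, htipt, hsv, hsnet, ?_⟩
            rw [hey] at htipt hsy
            exact tips_determine htipt hsy (fun hh => hsnet hh.symm)
          obtain ⟨e1', q1', s1', hv1, hq1, -, hsv1, -, hd1⟩ := hget y1 (by simp)
          obtain ⟨e2', q2', s2', hv2, hq2, -, hsv2, -, hd2⟩ := hget y2 (by simp)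
          obtain ⟨e3', q3', s3', hv3, hq3, -, hsv3, -, hd3⟩ := hget y3 (by simp)
          have key : ∀ {ya yb : ↥S} {ea eb : Pr n} {qa qb : Fin ℓ} {sa sb : Fin n},
              ya.val = Sum.inr (ea, qa) → qa.val + 1 = lstar →
              yb.val = Sum.inr (eb, qb) → qb.val + 1 = lstar →
              ((ea.val = (t, sa) ∧ t < sa) ∨ (ea.val = (sa, t) ∧ sa < t)) →
              ((eb.val = (t, sb) ∧ t < sb) ∨ (eb.val = (sb, t) ∧ sb < t)) →
              sa = sb → ya = yb := by
            intro ya yb ea eb qa qb sa sb hva hqa hvb hqb hda hdb hsab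
            subst hsab
            have heab : ea = eb := by
              apply Subtype.ext
              rcases hda with ⟨g1, g2⟩ | ⟨g1, g2⟩ <;> rcases hdb with ⟨g3, g4⟩ | ⟨g3, g4⟩
              · rw [g1, g3]
              · exact absurd g2 (asymm g4)
              · exact absurd g2 (asymm g4)
              · rw [g1, g3]
            subst heab
            apply Subtype.ext
            rw [hva, hvb]
            have : qa = qb := Fin.ext (by omega)
            rw [this]
          have hs_eq : s1' = s2' ∨ s1' = s3' ∨ s2' = s3' := by
            rcases hvv : v.val with x | ⟨f, q⟩
            · rw [hvv] at hsv1 hsv2 hsv3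
              have g1 : s1' = x := hsv1
              have g2 : s2' = x := hsv2
              exact Or.inl (g1.trans g2.symm)
            · rw [hvv] at hsv1 hsv2 hsv3
              have g1 : s1' = f.val.1 ∨ s1' = f.val.2 := hsv1
              have g2 : s2' = f.val.1 ∨ s2' = f.val.2 := hsv2
              have g3 : s3' = f.val.1 ∨ s3' = f.val.2 := hsv3
              rcases g1 with g1 | g1 <;> rcases g2 with g2 | g2 <;> rcases g3 with g3 | g3 <;>
                first
                  | exact Or.inl (g1.trans g2.symm)
                  | exact Or.inr (Or.inl (g1.trans g3.symm))
                  | exact Or.inr (Or.inr (g2.trans g3.symm))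
          rcases hs_eq with hs | hs | hs
          · exact h12 (key hv1 hq1 hv2 hq2 hd1 hd2 hs)
          · exact h13 (key hv1 hq1 hv3 hq3 hd1 hd3 hs)
          · exact h23 (key hv2 hq2 hv3 hq3 hd2 hd3 hs)
      · have := hgt_case Y v r (hYSK.trans hSKX) hT hcv (by omega)
        omega
  -- endgame
  obtain ⟨Y, hYL, hY12⟩ := Set.exists_subset_card_eq (show 12 ≤ L.ncard by omega)
  obtain ⟨v, r, hT⟩ := hSh Y (hYL.trans hLX)
  obtain ⟨y0, hy0⟩ := Set.nonempty_of_ncard_ne_zero (by omega : Y.ncard ≠ 0)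
  have hy0b : y0 ∈ gball (IG S) v r := ((Set.ext_iff.mp hT y0).mpr hy0).1
  have hcv : core S v.val :=
    core_of_linked (mem_gball_iff.mp hy0b).1 (hcore y0 (hYL.trans hLX hy0))
  rcases lt_trichotomy r (dep v.val + lstar) with hr | hr | hr
  · have := hlt_case Y v r hYL hT hr
    omega
  · have hshared : ∀ y ∈ Y, ¬ (br y.val = br v.val) →
        ∃ s, hasTip v.val s ∧ hasTip y.val s ∧ Sum.inl s ∈ S := by
      intro y hy hb
      have hyb : y ∈ gball (IG S) v r := ((Set.ext_iff.mp hT y).mpr hy).1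
      exact F3 hyb (fun hh => hb hh.symm) (by have := (hYL hy).2; omega)
    rcases hvv : v.val with x | ⟨f, q⟩
    · have hsub : Y ⊆ {w ∈ X | dep w.val = lstar ∧ br w.val = br v.val} ∪
          {w ∈ X | dep w.val = lstar ∧ hasTip w.val x ∧ Sum.inl x ∈ S} := by
        intro y hy
        by_cases hb : br y.val = br v.val
        · exact Or.inl ⟨(hYL hy).1, (hYL hy).2, hb⟩
        · obtain ⟨s, hsv, hsy, hsS⟩ := hshared y hy hb
          rw [hvv] at hsv
          have hsx : s = x := hsv
          subst hsx
          exact Or.inr ⟨(hYL hy).1, (hYL hy).2, hsy, hsS⟩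
      have h2 := Set.ncard_le_ncard hsub (Set.toFinite _)
      have h3 := Set.ncard_union_le {w ∈ X | dep w.val = lstar ∧ br w.val = br v.val}
        {w ∈ X | dep w.val = lstar ∧ hasTip w.val x ∧ Sum.inl x ∈ S}
      have h4 := hlb (br v.val)
      have h5 := hstar5 x
      omega
    · have hsub : Y ⊆ ({w ∈ X | dep w.val = lstar ∧ br w.val = br v.val} ∪
          {w ∈ X | dep w.val = lstar ∧ hasTip w.val f.val.1 ∧ Sum.inl f.val.1 ∈ S}) ∪
          {w ∈ X | dep w.val = lstar ∧ hasTip w.val f.val.2 ∧ Sum.inl f.val.2 ∈ S} := by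
        intro y hy
        by_cases hb : br y.val = br v.val
        · exact Or.inl (Or.inl ⟨(hYL hy).1, (hYL hy).2, hb⟩)
        · obtain ⟨s, hsv, hsy, hsS⟩ := hshared y hy hb
          rw [hvv] at hsv
          have hsx : s = f.val.1 ∨ s = f.val.2 := hsv
          rcases hsx with rfl | rfl
          · exact Or.inl (Or.inr ⟨(hYL hy).1, (hYL hy).2, hsy, hsS⟩)
          · exact Or.inr ⟨(hYL hy).1, (hYL hy).2, hsy, hsS⟩
      have h2 := Set.ncard_le_ncard hsub (Set.toFinite _)
      have h3 := Set.ncard_union_le ({w ∈ X | dep w.val = lstar ∧ br w.val = br v.val} ∪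
          {w ∈ X | dep w.val = lstar ∧ hasTip w.val f.val.1 ∧ Sum.inl f.val.1 ∈ S})
        {w ∈ X | dep w.val = lstar ∧ hasTip w.val f.val.2 ∧ Sum.inl f.val.2 ∈ S}
      have h3' := Set.ncard_union_le {w ∈ X | dep w.val = lstar ∧ br w.val = br v.val}
        {w ∈ X | dep w.val = lstar ∧ hasTip w.val f.val.1 ∧ Sum.inl f.val.1 ∈ S}
      have h4 := hlb (br v.val)
      have h5 := hstar5 f.val.1
      have h6 := hstar5 f.val.2
      omega
  · have := hgt_case Y v r (hYL.trans hLX) hT hcv (by omega)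
    omega

end withS

end
section twoshatter

lemma lip_edist {V' : Type*} (G' : SimpleGraph V') (f : V' → ℕ)
    (hf : ∀ a b, G'.Adj a b → f b ≤ f a + 1) {u w : V'} (hu : f u = 0) :
    (f w : ℕ∞) ≤ G'.edist u w := by
  have hwalk : ∀ (a b : V') (p : G'.Walk a b), f b ≤ f a + p.length := by
    intro a b p
    induction p with
    | nil => omega
    | @cons a' b' c' h q ih =>
      have h1 := hf a' b' h
      rw [SimpleGraph.Walk.length_cons]
      omega
  rcases eq_or_ne (G'.edist u w) ⊤ with h | h
  · rw [h]; exact le_top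
  · obtain ⟨p, hp⟩ := SimpleGraph.exists_walk_of_edist_ne_top h
    rw [← hp, Nat.cast_le]
    have := hwalk u w p
    omega

variable (x z : Fin n)

/-- Distance certificate from the deep vertex of column `e = {x,z}`. -/
def cert (e : Pr n) : Vt n ℓ → ℕ
  | .inl t => if t = x ∨ t = z then ℓ else ℓ + 1
  | .inr w => if w.1 = e then (ℓ - 1) - w.2.val
      else ℓ + w.2.val + 2 -
        (if w.1.val.1 = x ∨ w.1.val.1 = z ∨ w.1.val.2 = x ∨ w.1.val.2 = z then 1 else 0)

lemma cert_lip (hl : 1 ≤ ℓ) {e : Pr n} (he : e.val = (x, z)) :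
    ∀ a b : Vt n ℓ, (Gr n ℓ).Adj a b → cert x z e b ≤ cert x z e a + 1 := by
  intro a b hadj
  have hadj' : adj a b := hadj
  have hex : e.val.1 = x := by rw [he]
  have hez : e.val.2 = z := by rw [he]
  cases a with
  | inl t =>
    cases b with
    | inl t' =>
      simp only [cert]
      split_ifs <;> omega
    | inr w =>
      obtain ⟨f, j⟩ := w
      simp only [adj] at hadj'
      obtain ⟨hj0, ht⟩ := hadj'
      simp only [cert]
      by_cases hf : f = e
      · subst hf
        split_ifs <;> omega
      · have hσ : (t = x ∨ t = z) → (f.val.1 = x ∨ f.val.1 = z ∨ f.val.2 = x ∨ f.val.2 = z) := by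
          intro h
          rcases ht with h' | h' <;> rcases h with h'' | h'' <;> rw [h''] at h' <;> tauto
        rw [if_neg hf]
        split_ifs with g1 g2 g2 <;> first | omega | (exact absurd (hσ g1) g2)
  | inr w =>
    obtain ⟨f, i⟩ := w
    cases b with
    | inl t =>
      simp only [adj] at hadj'
      obtain ⟨hi0, ht⟩ := hadj'
      simp only [cert]
      by_cases hf : f = e
      · subst hf
        have htx : t = x ∨ t = z := by
          rcases ht with h | h
          · left; rw [h, hex]
          · right; rw [h, hez]
        rw [if_pos rfl, if_pos htx]
        have hi0' : i.val = 0 := hi0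
        omega
      · rw [if_neg hf]
        split_ifs <;> omega
    | inr w' =>
      obtain ⟨g, j⟩ := w'
      simp only [adj] at hadj'
      obtain ⟨hfg, hij⟩ := hadj'
      subst hfg
      have hij' : i.val + 1 = j.val ∨ j.val + 1 = i.val := hij
      simp only [cert]
      by_cases hf : f = e
      · rw [if_pos hf, if_pos hf]
        have := j.isLt
        omega
      · rw [if_neg hf, if_neg hf]
        split_ifs <;> omega

lemma gr_edist_col (e : Pr n) : ∀ (d : ℕ) (i j : Fin ℓ), i.val + d = j.val →
    (Gr n ℓ).edist (Sum.inr (e, j)) (Sum.inr (e, i)) ≤ (d : ℕ∞) := by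
  intro d
  induction d with
  | zero =>
    intro i j hij
    have : i = j := Fin.ext (by omega)
    rw [this]
    simp [SimpleGraph.edist_self]
  | succ d ih =>
    intro i j hij
    have hjlt : i.val + d < ℓ := by omega
    have hadj : (Gr n ℓ).Adj (Sum.inr (e, j)) (Sum.inr (e, (⟨i.val + d, hjlt⟩ : Fin ℓ))) :=
      show adj (Sum.inr (e, j)) (Sum.inr (e, (⟨i.val + d, hjlt⟩ : Fin ℓ))) from
        ⟨rfl, Or.inr (show i.val + d + 1 = j.val by omega)⟩
    calc (Gr n ℓ).edist (Sum.inr (e, j)) (Sum.inr (e, i)) ≤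
        (Gr n ℓ).edist (Sum.inr (e, j)) (Sum.inr (e, (⟨i.val + d, hjlt⟩ : Fin ℓ))) +
        (Gr n ℓ).edist (Sum.inr (e, (⟨i.val + d, hjlt⟩ : Fin ℓ))) (Sum.inr (e, i)) :=
          SimpleGraph.edist_triangle
    _ ≤ 1 + (d : ℕ∞) := by
        refine add_le_add ?_ (ih i ⟨i.val + d, hjlt⟩ rfl)
        have := SimpleGraph.edist_le hadj.toWalk
        simpa using this
    _ = ((d + 1 : ℕ) : ℕ∞) := by push_cast; ring

lemma pair_ball (hl : 1 ≤ ℓ) (hxz : x < z) :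
    gball (Gr n ℓ) (Sum.inr ((⟨(x, z), hxz⟩ : Pr n), (⟨ℓ - 1, by omega⟩ : Fin ℓ))) ℓ ∩
      Set.range (Sum.inl : Fin n → Vt n ℓ) = {Sum.inl x, Sum.inl z} := by
  set e : Pr n := ⟨(x, z), hxz⟩ with he
  set v : Vt n ℓ := Sum.inr (e, (⟨ℓ - 1, by omega⟩ : Fin ℓ)) with hv
  have hcert0 : cert x z e v = 0 := by
    simp [hv, cert]
  have hlow : ∀ w : Vt n ℓ, (cert x z e w : ℕ∞) ≤ (Gr n ℓ).edist v w :=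
    fun w => lip_edist (Gr n ℓ) (cert x z e) (cert_lip x z hl rfl) hcert0
  have hupper : ∀ t : Fin n, (t = x ∨ t = z) → (Gr n ℓ).edist v (Sum.inl t) ≤ (ℓ : ℕ∞) := by
    intro t ht
    have h1 : (Gr n ℓ).edist v (Sum.inr (e, (⟨0, by omega⟩ : Fin ℓ))) ≤ ((ℓ - 1 : ℕ) : ℕ∞) :=
      gr_edist_col e (ℓ - 1) ⟨0, by omega⟩ ⟨ℓ - 1, by omega⟩ (show 0 + (ℓ - 1) = ℓ - 1 by omega)
    have hadj : (Gr n ℓ).Adj (Sum.inr (e, (⟨0, by omega⟩ : Fin ℓ))) (Sum.inl t) := by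
      show adj (Sum.inr (e, (⟨0, by omega⟩ : Fin ℓ))) (Sum.inl t)
      refine ⟨rfl, ?_⟩
      rcases ht with rfl | rfl
      · left; rfl
      · right; rfl
    calc (Gr n ℓ).edist v (Sum.inl t) ≤
        (Gr n ℓ).edist v (Sum.inr (e, (⟨0, by omega⟩ : Fin ℓ))) +
        (Gr n ℓ).edist (Sum.inr (e, (⟨0, by omega⟩ : Fin ℓ))) (Sum.inl t) :=
          SimpleGraph.edist_triangle
    _ ≤ ((ℓ - 1 : ℕ) : ℕ∞) + 1 := by
        refine add_le_add h1 ?_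
        have := SimpleGraph.edist_le hadj.toWalk
        simpa using this
    _ = (ℓ : ℕ∞) := by
        rw [show (1 : ℕ∞) = ((1 : ℕ) : ℕ∞) from rfl, ← Nat.cast_add]
        congr 1
        omega
  ext w
  constructor
  · rintro ⟨hball, t, rfl⟩
    have hle : (Gr n ℓ).edist v (Sum.inl t) ≤ (ℓ : ℕ∞) := hball
    have hlow' := hlow (Sum.inl t)
    by_contra hmem
    simp only [Set.mem_insert_iff, Set.mem_singleton_iff, Sum.inl.injEq] at hmem
    push_neg at hmem
    have hct : cert x z e (Sum.inl t : Vt n ℓ) = ℓ + 1 := by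
      simp only [cert]
      rw [if_neg (by tauto)]
    rw [hct] at hlow'
    have : ((ℓ + 1 : ℕ) : ℕ∞) ≤ (ℓ : ℕ∞) := le_trans hlow' hle
    rw [Nat.cast_le] at this
    omega
  · intro hw
    rcases hw with rfl | rfl
    · exact ⟨hupper x (Or.inl rfl), ⟨x, rfl⟩⟩
    · exact ⟨hupper z (Or.inr rfl), ⟨z, rfl⟩⟩

end twoshatter

end VCC

/-- For all `n` and `ℓ ≥ 1` there is a graph of distance VC-dimension at most 18 whose
`B_ℓ`-hypergraph has 2VC-dimension at least `n`. -/
theorem stmt4 (n ℓ : ℕ) (hℓ : 1 ≤ ℓ) :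
    ∃ (V : Type) (_ : Fintype V) (G : SimpleGraph V),
      distVCdimLE G 18 ∧ ∃ X : Set V, n ≤ X.ncard ∧ Bl2Shattered G ℓ X := by
  refine ⟨VCC.Vt n ℓ, inferInstance, VCC.Gr n ℓ, VCC.vc18,
    Set.range (Sum.inl : Fin n → VCC.Vt n ℓ), ?_, ?_⟩
  · rw [← Set.image_univ, Set.ncard_image_of_injective _ Sum.inl_injective, Set.ncard_univ]
    simp
  · intro Y hY h2
    obtain ⟨a, b, hab, rfl⟩ := Set.ncard_eq_two.mp h2
    obtain ⟨xa, ha⟩ := hY (Set.mem_insert _ _)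
    obtain ⟨xb, hb⟩ := hY (show b ∈ ({a, b} : Set (VCC.Vt n ℓ)) by simp)
    have hxab : xa ≠ xb := by
      intro h
      apply hab
      rw [← ha, ← hb, h]
    rcases lt_trichotomy xa xb with h | h | h
    · exact ⟨Sum.inr ((⟨(xa, xb), h⟩ : VCC.Pr n), (⟨ℓ - 1, by omega⟩ : Fin ℓ)),
        by rw [VCC.pair_ball xa xb hℓ h, ha, hb]⟩
    · exact absurd h hxab
    · refine ⟨Sum.inr ((⟨(xb, xa), h⟩ : VCC.Pr n), (⟨ℓ - 1, by omega⟩ : Fin ℓ)), ?_⟩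
      rw [VCC.pair_ball xb xa hℓ h, ha, hb]
      exact Set.pair_comm _ _
end

section
/- Let G=(V,E) be a graph and ℓ an integer. If there exist two disjoint subsets A, B of V with |B| = 2^{|A|} that are ℓ-disconnectable, then the distance VC-dimension of G is at least |A|. -/
open SimpleGraph

lemma edist_le_iff' {V : Type*} {G : SimpleGraph V} {u v : V} {ℓ : ℕ} :
    G.edist u v ≤ (ℓ : ℕ∞) ↔ ∃ p : G.Walk u v, p.length ≤ ℓ := by
  constructor
  · intro h
    have hne : G.edist u v ≠ ⊤ := by
      intro ht; rw [ht] at h; exact (ENat.coe_lt_top ℓ).not_ge h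
    obtain ⟨p, hp⟩ := SimpleGraph.exists_walk_of_edist_ne_top hne
    exact ⟨p, by exact_mod_cast hp.le.trans h⟩
  · rintro ⟨p, hp⟩
    exact (SimpleGraph.edist_le p).trans (by exact_mod_cast hp)

lemma exists_induce_walk {V : Type*} {G : SimpleGraph V} {s : Set V} {a b : V}
    (ha : a ∈ s) (hb : b ∈ s) (p : G.Walk a b) (hp : ∀ v ∈ p.support, v ∈ s) :
    ∃ q : (G.induce s).Walk ⟨a, ha⟩ ⟨b, hb⟩, q.length = p.length := by
  induction p with
  | nil => exact ⟨SimpleGraph.Walk.nil, rfl⟩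
  | @cons u x w h p ih =>
    have hx : x ∈ s := hp x (by simp)
    obtain ⟨q, hq⟩ := ih hx hb (fun v hv => hp v (by simp [hv]))
    exact ⟨SimpleGraph.Walk.cons (by exact h : (G.induce s).Adj ⟨u, ha⟩ ⟨x, hx⟩) q, by exact congrArg (· + 1) hq⟩

lemma exists_walk_of_induce {V : Type*} {G : SimpleGraph V} {s : Set V} {x y : s}
    (q : (G.induce s).Walk x y) :
    ∃ p : G.Walk x.1 y.1, p.length = q.length ∧ ∀ v ∈ p.support, v ∈ s := by
  induction q with
  | nil => exact ⟨SimpleGraph.Walk.nil, rfl, by simp⟩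
  | @cons u x' w h q ih =>
    obtain ⟨p, hl, hs⟩ := ih
    refine ⟨SimpleGraph.Walk.cons (by exact h) p, by exact congrArg (· + 1) hl, ?_⟩
    intro v hv
    replace hv := List.mem_cons.mp (show v ∈ (u.1 :: p.support) from hv)
    rcases hv with rfl | hv
    · exact u.2
    · exact hs v hv

/-- The distance VC-dimension of `G` is at least `n`: some induced subgraph of `G` has a set of
size at least `n` shattered by its balls. -/
def distVCdimGE {V : Type*} (G : SimpleGraph V) (n : ℕ) : Prop :=
  ∃ (S : Set V) (X : Set S), BShattered (G.induce S) X ∧ n ≤ X.ncard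

/-- `d(a,b) > ℓ` holds in the graph obtained from `G` by deleting the vertex set `W`:
every walk from `a` to `b` in `G` of length at most `ℓ` meets `W`. -/
def DistGTAfterDeleting {V : Type*} (G : SimpleGraph V) (a b : V) (ℓ : ℕ) (W : Set V) : Prop :=
  ∀ p : G.Walk a b, p.length ≤ ℓ → ∃ v ∈ p.support, v ∈ W

/-- if disjoint sets `A`, `B` with `|B| = 2^{|A|}` are ℓ-disconnectable
(witnessed by the family `S a b`, `(a,b) ∈ A × B`, of sets disjoint from `A ∪ B`), then the
distance VC-dimension of `G` is at least `|A|`. -/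
theorem stmt5 {V : Type*} [Fintype V] [DecidableEq V] (G : SimpleGraph V) (ℓ : ℕ)
    (A B : Finset V) (hAB : Disjoint A B) (hcard : B.card = 2 ^ A.card)
    (S : V → V → Set V)
    (hSdisj : ∀ a ∈ A, ∀ b ∈ B, Disjoint (S a b) ((A : Set V) ∪ (B : Set V)))
    (hdisc : ∀ C : Finset (V × V), C ⊆ A ×ˢ B → ∀ a ∈ A, ∀ b ∈ B,
      (DistGTAfterDeleting G a b ℓ {v | ∃ q ∈ C, v ∈ S q.1 q.2} ↔ (a, b) ∈ C)) :
    distVCdimGE G A.card := by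
  classical
  have hpow : B.card = A.powerset.card := by simp [Finset.card_powerset, hcard]
  let e := Finset.equivOfCardEq hpow
  let g : V → Finset V := fun b => if h : b ∈ B then (e ⟨b, h⟩).1 else ∅
  let C : Finset (V × V) := (A ×ˢ B).filter (fun q => q.1 ∉ g q.2)
  have hCsub : C ⊆ A ×ˢ B := Finset.filter_subset _ _
  set W : Set V := {v | ∃ q ∈ C, v ∈ S q.1 q.2} with hWdef
  set s : Set V := {v | v ∉ W} with hsdef
  have hABs : ∀ v ∈ (A : Set V) ∪ (B : Set V), v ∈ s := by
    rintro v hv ⟨q, hq, hvq⟩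
    have hqAB := Finset.mem_product.mp (hCsub hq)
    exact Set.disjoint_left.mp (hSdisj q.1 hqAB.1 q.2 hqAB.2) hvq hv
  have hAs : ∀ a ∈ A, a ∈ s := fun a ha => hABs a (Or.inl (by exact_mod_cast ha))
  have hBs : ∀ b ∈ B, b ∈ s := fun b hb => hABs b (Or.inr (by exact_mod_cast hb))
  refine ⟨s, {x : s | x.1 ∈ A}, ?_, ?_⟩
  · -- shattered
    intro Y hY
    set A' : Finset V := A.filter (fun a => ∃ h : a ∈ s, (⟨a, h⟩ : s) ∈ Y) with hA'def
    have hA'sub : A' ⊆ A := Finset.filter_subset _ _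
    have hA'mem : A' ∈ A.powerset := Finset.mem_powerset.mpr hA'sub
    set b : V := (e.symm ⟨A', hA'mem⟩).1 with hbdef
    have hb : b ∈ B := (e.symm ⟨A', hA'mem⟩).2
    have hgb : g b = A' := by
      have : (⟨b, hb⟩ : {x // x ∈ B}) = e.symm ⟨A', hA'mem⟩ := Subtype.ext rfl
      simp only [g, dif_pos hb, this, Equiv.apply_symm_apply]
    have key : ∀ a ∈ A, ((a, b) ∈ C ↔ a ∉ A') := by
      intro a ha
      simp [C, Finset.mem_filter, Finset.mem_product, ha, hb, hgb]
    have key2 : ∀ a ∈ A, (DistGTAfterDeleting G a b ℓ W ↔ a ∉ A') := by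
      intro a ha
      rw [hdisc C hCsub a ha b hb]
      exact key a ha
    refine ⟨⟨b, hBs b hb⟩, ℓ, ?_⟩
    ext x
    obtain ⟨xv, hxv⟩ := x
    simp only [Set.mem_inter_iff, Set.mem_setOf_eq, gball]
    constructor
    · rintro ⟨hball, hX⟩
      obtain ⟨q, hq⟩ := edist_le_iff'.mp hball
      obtain ⟨p, hpl, hps⟩ := exists_walk_of_induce q
      have hnd : ¬ DistGTAfterDeleting G xv b ℓ W := by
        intro hd
        obtain ⟨v, hv, hvW⟩ := hd p.reverse (by rw [SimpleGraph.Walk.length_reverse, hpl]; exact hq)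
        rw [SimpleGraph.Walk.support_reverse, List.mem_reverse] at hv
        exact hps v hv hvW
      have hxA' : xv ∈ A' := by
        by_contra h
        exact hnd ((key2 xv hX).mpr h)
      rw [hA'def, Finset.mem_filter] at hxA'
      obtain ⟨_, h, hmem⟩ := hxA'
      exact hmem
    · intro hxY
      have hX : xv ∈ A := hY hxY
      have hxA' : xv ∈ A' := by
        rw [hA'def, Finset.mem_filter]
        exact ⟨hX, hxv, hxY⟩
      have hnd : ¬ DistGTAfterDeleting G xv b ℓ W := fun hd => ((key2 xv hX).mp hd) hxA'
      simp only [DistGTAfterDeleting] at hnd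
      push_neg at hnd
      obtain ⟨p, hpl, hps⟩ := hnd
      obtain ⟨q, hq⟩ := exists_induce_walk (hBs b hb) hxv p.reverse
        (by intro v hv
            rw [SimpleGraph.Walk.support_reverse, List.mem_reverse] at hv
            exact hps v hv)
      refine ⟨edist_le_iff'.mpr ⟨q, ?_⟩, hX⟩
      rw [hq, SimpleGraph.Walk.length_reverse]
      exact hpl
  · -- cardinality
    have himg : Subtype.val '' {x : s | x.1 ∈ A} = (A : Set V) := by
      ext v
      simp only [Set.mem_image, Set.mem_setOf_eq, Finset.coe_sort_coe]
      constructor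
      · rintro ⟨x, hx, rfl⟩; exact hx
      · intro hv; exact ⟨⟨v, hAs v hv⟩, hv, rfl⟩
    have := Set.ncard_image_of_injective {x : s | x.1 ∈ A} Subtype.val_injective
    rw [himg, Set.ncard_coe_finset] at this
    exact this.le
end

section
/- Let k > 0 and n be integers. Every k-interference square matrix that has no proper submatrix of size n has size less than k·n³. -/
open Finset

/-- Greedy extraction of an "independent set" in a digraph `a → a'` iff `a' ∈ nb a`
with all (relevant) out-degrees at most `d`. -/
lemma stmt7_indep_greedy {α : Type*} [DecidableEq α] (nb : α → Finset α) (d : ℕ) :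
    ∀ (j : ℕ) (S : Finset α),
      (∀ a ∈ S, (nb a).card ≤ d) → (∀ a ∈ S, a ∉ nb a) →
      j * (2 * d + 1) < S.card + (2 * d + 1) →
      ∃ A' : Finset α, A' ⊆ S ∧ A'.card = j ∧
        ∀ a ∈ A', ∀ a' ∈ A', a' ∉ nb a := by
  intro j
  induction j with
  | zero =>
    intro S _ _ _
    exact ⟨∅, empty_subset _, card_empty, by simp⟩
  | succ j ih =>
    intro S hd hself hcard
    have hSpos : 0 < S.card := by nlinarith [hcard]
    -- pigeonhole: a vertex of total degree at most 2d
    have hpig : ∃ a ∈ S,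
        ((nb a ∩ S).card + (S.filter fun x => a ∈ nb x).card) ≤ 2 * d := by
      by_contra hno
      push_neg at hno
      have h1 : ∑ a ∈ S, (nb a ∩ S).card ≤ d * S.card := by
        calc ∑ a ∈ S, (nb a ∩ S).card ≤ ∑ _a ∈ S, d :=
              sum_le_sum fun a ha =>
                le_trans (card_le_card inter_subset_left) (hd a ha)
        _ = d * S.card := by rw [sum_const, smul_eq_mul, mul_comm]
      have h2 : ∑ a ∈ S, (S.filter fun x => a ∈ nb x).card ≤ d * S.card := by
        have hcc : ∑ a ∈ S, (S.filter fun x => a ∈ nb x).card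
            = ∑ x ∈ S, (S.filter fun a => a ∈ nb x).card := by
          simp only [card_filter]
          exact Finset.sum_comm
        rw [hcc]
        calc ∑ x ∈ S, (S.filter fun a => a ∈ nb x).card ≤ ∑ _x ∈ S, d := by
              refine sum_le_sum fun x hx => ?_
              refine le_trans (card_le_card ?_) (hd x hx)
              intro a ha
              exact (mem_filter.mp ha).2
        _ = d * S.card := by rw [sum_const, smul_eq_mul, mul_comm]
      have hlow : (2 * d + 1) * S.card ≤
          ∑ a ∈ S, ((nb a ∩ S).card + (S.filter fun x => a ∈ nb x).card) := by
        calc (2 * d + 1) * S.card = ∑ _a ∈ S, (2 * d + 1) := by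
              rw [sum_const, smul_eq_mul, mul_comm]
        _ ≤ _ := sum_le_sum fun a ha => hno a ha
      have hup : ∑ a ∈ S, ((nb a ∩ S).card + (S.filter fun x => a ∈ nb x).card)
          ≤ 2 * d * S.card := by
        rw [sum_add_distrib]
        nlinarith [h1, h2]
      nlinarith [hlow, hup, hSpos]
    obtain ⟨a, haS, hdeg⟩ := hpig
    set D : Finset α := insert a ((nb a ∩ S) ∪ S.filter fun x => a ∈ nb x) with hD
    set S' : Finset α := S \ D with hS'
    have hDcard : D.card ≤ 2 * d + 1 := by
      calc D.card ≤ ((nb a ∩ S) ∪ S.filter fun x => a ∈ nb x).card + 1 :=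
            card_insert_le _ _
      _ ≤ ((nb a ∩ S).card + (S.filter fun x => a ∈ nb x).card) + 1 := by
            exact Nat.add_le_add_right (card_union_le _ _) 1
      _ ≤ 2 * d + 1 := Nat.add_le_add_right hdeg 1
    have hScard : S.card ≤ S'.card + (2 * d + 1) :=
      le_trans card_le_card_sdiff_add_card (Nat.add_le_add_left hDcard _)
    have hrec : j * (2 * d + 1) < S'.card + (2 * d + 1) := by
      have : (j + 1) * (2 * d + 1) = j * (2 * d + 1) + (2 * d + 1) := by ring
      omega
    obtain ⟨A'', hA''S', hA''card, hA''ind⟩ :=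
      ih S' (fun x hx => hd x (sdiff_subset hx)) (fun x hx => hself x (sdiff_subset hx)) hrec
    have haD : a ∈ D := mem_insert_self _ _
    have haS' : a ∉ S' := by simp [hS', haD]
    refine ⟨insert a A'', ?_, ?_, ?_⟩
    · exact insert_subset haS (hA''S'.trans sdiff_subset)
    · rw [card_insert_of_notMem (fun h => haS' (hA''S' h)), hA''card]
    · intro x hx y hy
      rcases mem_insert.mp hx with hxa | hxA
      · rcases mem_insert.mp hy with hya | hyA
        · rw [hxa, hya]; exact hself a haS
        · -- y ∈ A'' ⊆ S', so y ∉ nb a, since nb a ∩ S ⊆ D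
          rw [hxa]
          intro hyn
          have hyS' := hA''S' hyA
          have hyS : y ∈ S := sdiff_subset hyS'
          have : y ∈ D := by
            refine mem_insert_of_mem (mem_union_left _ ?_)
            exact mem_inter.mpr ⟨hyn, hyS⟩
          exact (mem_sdiff.mp hyS').2 this
      · rcases mem_insert.mp hy with hya | hyA
        · -- x ∈ A'' ⊆ S', so a ∉ nb x
          rw [hya]
          intro han
          have hxS' := hA''S' hxA
          have hxS : x ∈ S := sdiff_subset hxS'
          have : x ∈ D := by
            refine mem_insert_of_mem (mem_union_right _ ?_)
            exact mem_filter.mpr ⟨hxS, han⟩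
          exact (mem_sdiff.mp hxS').2 this
        · exact hA''ind x hxA y hyA

/-- Counting `n`-subsets containing two fixed distinct elements. -/
lemma stmt7_count_pairs {α : Type*} [DecidableEq α] (B : Finset α) (n : ℕ) {b c : α}
    (hb : b ∈ B) (hc : c ∈ B) (hbc : b ≠ c) :
    ((B.powersetCard n).filter fun B' => b ∈ B' ∧ c ∈ B').card
      ≤ (B.card - 2).choose (n - 2) := by
  classical
  have hcB : c ∈ B.erase b := mem_erase.mpr ⟨hbc.symm, hc⟩
  have htcard : ((B.erase b).erase c).card = B.card - 2 := by
    rw [card_erase_of_mem hcB, card_erase_of_mem hb]; omega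
  calc ((B.powersetCard n).filter fun B' => b ∈ B' ∧ c ∈ B').card
      ≤ (((B.erase b).erase c).powersetCard (n - 2)).card := by
        refine card_le_card_of_injOn (fun B' => (B'.erase b).erase c) ?_ ?_
        · intro B' hB'
          rw [mem_coe, mem_filter] at hB'
          obtain ⟨hB'P, hbB', hcB'⟩ := hB'
          obtain ⟨hB'B, hB'card⟩ := mem_powersetCard.mp hB'P
          refine mem_powersetCard.mpr ⟨?_, ?_⟩
          · exact erase_subset_erase c (erase_subset_erase b hB'B)
          · rw [card_erase_of_mem (mem_erase.mpr ⟨hbc.symm, hcB'⟩),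
              card_erase_of_mem hbB', hB'card]
            omega
        · intro B1 h1 B2 h2 heq
          simp only [coe_filter, Set.mem_setOf_eq] at h1 h2
          obtain ⟨_, hb1, hc1⟩ := h1
          obtain ⟨_, hb2, hc2⟩ := h2
          have key : ∀ B' : Finset α, b ∈ B' → c ∈ B' →
              insert b (insert c ((B'.erase b).erase c)) = B' := by
            intro B' hb' hc'
            rw [insert_erase (mem_erase.mpr ⟨hbc.symm, hc'⟩), insert_erase hb']
          have heq' : (B1.erase b).erase c = (B2.erase b).erase c := heq
          rw [← key B1 hb1 hc1, ← key B2 hb2 hc2, heq']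
  _ = ((B.erase b).erase c).card.choose (n - 2) := card_powersetCard _ _
  _ = (B.card - 2).choose (n - 2) := by rw [htcard]

/-- Binomial identity: `C(N,n)·n·(n-1) = C(N-2,n-2)·N·(N-1)` for `2 ≤ n ≤ N`. -/
lemma stmt7_choose_id (N n : ℕ) (h2 : 2 ≤ n) (hn : n ≤ N) :
    N.choose n * (n * (n - 1)) = (N - 2).choose (n - 2) * (N * (N - 1)) := by
  obtain ⟨j, rfl⟩ : ∃ j, n = j + 2 := ⟨n - 2, by omega⟩
  obtain ⟨M, rfl⟩ : ∃ M, N = M + 2 := ⟨N - 2, by omega⟩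
  have e1 := Nat.add_one_mul_choose_eq (M + 1) (j + 1)
  have e2 := Nat.add_one_mul_choose_eq M j
  have r1 : j + 2 - 1 = j + 1 := by omega
  have r2 : j + 2 - 2 = j := by omega
  have r3 : M + 2 - 1 = M + 1 := by omega
  have r4 : M + 2 - 2 = M := by omega
  rw [r1, r2, r3, r4]
  calc (M + 2).choose (j + 2) * ((j + 2) * (j + 1))
      = ((M + 2).choose (j + 1 + 1) * (j + 1 + 1)) * (j + 1) := by ring_nf
  _ = ((M + 1 + 1) * (M + 1).choose (j + 1)) * (j + 1) := by rw [← e1]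
  _ = (M + 2) * ((M + 1).choose (j + 1) * (j + 1)) := by ring_nf
  _ = (M + 2) * ((M + 1) * M.choose j) := by
        rw [show (M + 1).choose (j + 1) * (j + 1) = (M + 1) * M.choose j from by
          rw [e2]]
  _ = M.choose j * ((M + 2) * (M + 1)) := by ring

/-- a `k`-interference square matrix (rows `A`, columns `B`, entries
`m a b ⊆ (A ∪ B) \ {a, b}` of size at most `k`) with no proper (all entries empty)
square submatrix of size `n` has size less than `k · n³`. -/
theorem stmt7 {α : Type*} [DecidableEq α] (k n : ℕ) (hk : 0 < k)
    (A B : Finset α) (hdisj : Disjoint A B) (hsquare : A.card = B.card)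
    (m : α → α → Finset α)
    (hentry : ∀ a ∈ A, ∀ b ∈ B, m a b ⊆ (A ∪ B) \ {a, b})
    (hsize : ∀ a ∈ A, ∀ b ∈ B, (m a b).card ≤ k)
    (hproper : ¬ ∃ (A' B' : Finset α), A' ⊆ A ∧ B' ⊆ B ∧ A'.card = n ∧ B'.card = n ∧
      ∀ a ∈ A', ∀ b ∈ B', m a b ∩ (A' ∪ B') = ∅) :
    A.card < k * n ^ 3 := by
  classical
  by_contra hcon
  push_neg at hcon
  apply hproper
  -- case n = 0
  rcases Nat.eq_zero_or_pos n with rfl | hn1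
  · exact ⟨∅, ∅, empty_subset _, empty_subset _, card_empty, card_empty, by simp⟩
  rcases eq_or_lt_of_le (show 1 ≤ n from hn1) with hn1' | hn2
  · -- case n = 1
    have hA : A.Nonempty := by
      rw [← card_pos]
      exact lt_of_lt_of_le (Nat.mul_pos hk (pow_pos hn1 3)) hcon
    have hB : B.Nonempty := by rw [← card_pos, ← hsquare]; exact card_pos.mpr hA
    obtain ⟨a, ha⟩ := hA
    obtain ⟨b, hb⟩ := hB
    refine ⟨{a}, {b}, singleton_subset_iff.mpr ha, singleton_subset_iff.mpr hb,
      by rw [card_singleton]; exact hn1', by rw [card_singleton]; exact hn1', ?_⟩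
    intro a' ha' b' hb'
    rw [mem_singleton] at ha' hb'
    subst ha'; subst hb'
    rw [eq_empty_iff_forall_notMem]
    intro c hc
    rw [mem_inter] at hc
    have := hentry a' ha b' hb hc.1
    rw [mem_sdiff] at this
    have hcab : c ∈ ({a', b'} : Finset α) := by
      simpa using hc.2
    exact this.2 hcab
  -- main case 2 ≤ n
  obtain ⟨p, rfl⟩ : ∃ p, n = p + 2 := ⟨n - 2, by omega⟩
  set N := A.card with hNdef
  have hBN : B.card = N := hsquare.symm
  have hNbig : k * (p + 2) ^ 3 ≤ N := hcon
  have hNn : p + 2 ≤ N := by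
    refine le_trans ?_ hNbig
    calc p + 2 ≤ (p + 2) ^ 3 := Nat.le_self_pow (by norm_num) _
    _ ≤ k * (p + 2) ^ 3 := Nat.le_mul_of_pos_left _ hk
  set P := B.powersetCard (p + 2) with hP
  set T := k * (p + 2) * (p + 1) with hT
  -- Phase 1 : a column set with few bad rows
  have key : ∃ B' ∈ P, (A.filter fun a => ∃ b ∈ B', (m a b ∩ B').Nonempty).card ≤ T := by
    by_contra hno
    push_neg at hno
    set C := (N - 2).choose ((p + 2) - 2) with hC
    have hPcard : P.card = N.choose (p + 2) := by rw [hP, card_powersetCard, hBN]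
    have hsum1 : (T + 1) * P.card
        ≤ ∑ B' ∈ P, (A.filter fun a => ∃ b ∈ B', (m a b ∩ B').Nonempty).card := by
      calc (T + 1) * P.card = ∑ _B' ∈ P, (T + 1) := by
            rw [sum_const, smul_eq_mul, mul_comm]
      _ ≤ _ := sum_le_sum fun B' hB' => hno B' hB'
    have hswap : ∑ B' ∈ P, (A.filter fun a => ∃ b ∈ B', (m a b ∩ B').Nonempty).card
        = ∑ a ∈ A, (P.filter fun B' => ∃ b ∈ B', (m a b ∩ B').Nonempty).card := by
      simp only [card_filter]
      exact Finset.sum_comm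
    have hbound : ∀ a ∈ A,
        (P.filter fun B' => ∃ b ∈ B', (m a b ∩ B').Nonempty).card ≤ N * (k * C) := by
      intro a ha
      have hsub : (P.filter fun B' => ∃ b ∈ B', (m a b ∩ B').Nonempty) ⊆
          B.biUnion fun b => (m a b ∩ B).biUnion fun c =>
            P.filter fun B' => b ∈ B' ∧ c ∈ B' := by
        intro B' hB'
        rw [mem_filter] at hB'
        obtain ⟨hB'P, b, hbB', c, hc⟩ := hB'
        have hB'B : B' ⊆ B := (mem_powersetCard.mp hB'P).1
        rw [mem_inter] at hc
        exact mem_biUnion.mpr ⟨b, hB'B hbB',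
          mem_biUnion.mpr ⟨c, mem_inter.mpr ⟨hc.1, hB'B hc.2⟩,
            mem_filter.mpr ⟨hB'P, hbB', hc.2⟩⟩⟩
      have step : ∀ b ∈ B,
          ((m a b ∩ B).biUnion fun c => P.filter fun B' => b ∈ B' ∧ c ∈ B').card
            ≤ k * C := by
        intro b hb
        calc ((m a b ∩ B).biUnion fun c => P.filter fun B' => b ∈ B' ∧ c ∈ B').card
            ≤ ∑ c ∈ m a b ∩ B, (P.filter fun B' => b ∈ B' ∧ c ∈ B').card :=
              card_biUnion_le
        _ ≤ ∑ _c ∈ m a b ∩ B, C := by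
              refine sum_le_sum fun c hc => ?_
              have hcm : c ∈ m a b := (mem_inter.mp hc).1
              have hcB : c ∈ B := (mem_inter.mp hc).2
              have hne : b ≠ c := by
                intro h
                have h2 := hentry a ha b hb hcm
                rw [mem_sdiff] at h2
                exact h2.2 (by simp [← h])
              have := stmt7_count_pairs B (p + 2) hb hcB hne
              rw [hBN] at this
              exact this
        _ = (m a b ∩ B).card * C := by rw [sum_const, smul_eq_mul]
        _ ≤ k * C := by
              refine Nat.mul_le_mul_right C ?_
              exact le_trans (card_le_card inter_subset_left) (hsize a ha b hb)
      calc (P.filter fun B' => ∃ b ∈ B', (m a b ∩ B').Nonempty).card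
          ≤ (B.biUnion fun b => (m a b ∩ B).biUnion fun c =>
              P.filter fun B' => b ∈ B' ∧ c ∈ B').card := card_le_card hsub
      _ ≤ ∑ b ∈ B, ((m a b ∩ B).biUnion fun c =>
              P.filter fun B' => b ∈ B' ∧ c ∈ B').card := card_biUnion_le
      _ ≤ ∑ _b ∈ B, k * C := sum_le_sum step
      _ = N * (k * C) := by rw [sum_const, smul_eq_mul, hBN]
    have htot : (T + 1) * N.choose (p + 2) ≤ N * (N * (k * C)) := by
      rw [← hPcard]
      calc (T + 1) * P.card
          ≤ ∑ a ∈ A, (P.filter fun B' => ∃ b ∈ B', (m a b ∩ B').Nonempty).card := by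
            rw [← hswap]; exact hsum1
      _ ≤ ∑ _a ∈ A, N * (k * C) := sum_le_sum hbound
      _ = N * (N * (k * C)) := by rw [sum_const, smul_eq_mul]
    have hCpos : 0 < C := Nat.choose_pos (by omega)
    have hid : N.choose (p + 2) * ((p + 2) * ((p + 2) - 1)) = C * (N * (N - 1)) :=
      stmt7_choose_id N (p + 2) (by omega) hNn
    have hp1 : (p + 2) - 1 = p + 1 := by omega
    rw [hp1] at hid
    -- multiply htot by (p+2)*(p+1) and cancel
    have h1 : (T + 1) * (N.choose (p + 2) * ((p + 2) * (p + 1)))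
        ≤ N * (N * (k * C)) * ((p + 2) * (p + 1)) := by
      calc (T + 1) * (N.choose (p + 2) * ((p + 2) * (p + 1)))
          = ((T + 1) * N.choose (p + 2)) * ((p + 2) * (p + 1)) := by ring
      _ ≤ (N * (N * (k * C))) * ((p + 2) * (p + 1)) :=
            Nat.mul_le_mul_right _ htot
    rw [hid] at h1
    obtain ⟨M, hM⟩ : ∃ M, N = M + 2 := ⟨N - 2, by omega⟩
    rw [hM] at h1
    have hM1 : M + 2 - 1 = M + 1 := by omega
    rw [hM1] at h1
    -- cancel the common factor C * (M + 2)
    have hL : (T + 1) * (C * ((M + 2) * (M + 1)))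
        = (C * (M + 2)) * ((T + 1) * (M + 1)) := by ring
    have hR : (M + 2) * ((M + 2) * (k * C)) * ((p + 2) * (p + 1))
        = (C * (M + 2)) * ((M + 2) * T) := by rw [hT]; ring
    rw [hL, hR] at h1
    have hpos : 0 < C * (M + 2) := Nat.mul_pos hCpos (by omega)
    have h2 : (T + 1) * (M + 1) ≤ (M + 2) * T := Nat.le_of_mul_le_mul_left h1 hpos
    -- but T + 1 < M + 1, contradiction
    have hTN : T + 2 ≤ M + 1 := by
      have hstep : 2 ≤ k * (p + 2) :=
        le_trans (by omega) (Nat.le_mul_of_pos_left _ hk)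
      have hstep2 : 2 ≤ k * (p + 2) * (p * p + 3 * p + 3) :=
        le_trans hstep (Nat.le_mul_of_pos_right _ (by positivity))
      have hring : k * (p + 2) ^ 3
          = k * (p + 2) * (p + 1) + k * (p + 2) * (p * p + 3 * p + 3) := by ring
      have hcube : k * (p + 2) * (p + 1) + 2 ≤ k * (p + 2) ^ 3 := by
        rw [hring]
        exact Nat.add_le_add_left hstep2 _
      have hMN : M + 2 = N := hM.symm
      linarith [hcube, hNbig, hT.le, hT.ge]
    have h3 : T * M + T + M + 1 ≤ T * M + 2 * T := by
      calc T * M + T + M + 1 = (T + 1) * (M + 1) := by ring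
      _ ≤ (M + 2) * T := h2
      _ = T * M + 2 * T := by ring
    linarith [h3, hTN]
  obtain ⟨B', hB'P, hbad⟩ := key
  obtain ⟨hB'B, hB'card⟩ := mem_powersetCard.mp hB'P
  -- Phase 2 : good rows and greedy independent set
  set S := A.filter fun a => ∀ b ∈ B', m a b ∩ B' = ∅ with hS
  have hScard : N ≤ S.card + T := by
    have hsplit : S.card + (A.filter fun a => ¬ ∀ b ∈ B', m a b ∩ B' = ∅).card
        = A.card := by
      rw [hS]
      exact card_filter_add_card_filter_not _
    have hneg : (A.filter fun a => ¬ ∀ b ∈ B', m a b ∩ B' = ∅)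
        = A.filter fun a => ∃ b ∈ B', (m a b ∩ B').Nonempty := by
      apply filter_congr
      intro a _
      simp only [not_forall, exists_prop, nonempty_iff_ne_empty, ne_eq]
    rw [hneg] at hsplit
    have hbad' := hbad
    omega
  set nb : α → Finset α := fun a => B'.biUnion fun b => m a b with hnb
  have hd : ∀ a ∈ S, (nb a).card ≤ k * (p + 2) := by
    intro a ha
    have haA : a ∈ A := filter_subset _ _ ha
    calc (nb a).card ≤ ∑ b ∈ B', (m a b).card := card_biUnion_le
    _ ≤ ∑ _b ∈ B', k := sum_le_sum fun b hb => hsize a haA b (hB'B hb)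
    _ = (p + 2) * k := by rw [sum_const, smul_eq_mul, hB'card]
    _ = k * (p + 2) := mul_comm _ _
  have hself : ∀ a ∈ S, a ∉ nb a := by
    intro a ha h
    obtain ⟨b, hb, ham⟩ := mem_biUnion.mp h
    have h2 := hentry a (filter_subset _ _ ha) b (hB'B hb) ham
    rw [mem_sdiff] at h2
    exact h2.2 (by simp)
  have hcard2 : (p + 2) * (2 * (k * (p + 2)) + 1)
      < S.card + (2 * (k * (p + 2)) + 1) := by
    have h1 : (p + 2) ≤ k * (p + 2) * (p * p + p + 1) := by
      calc p + 2 ≤ (p + 2) * (p * p + p + 1) :=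
            Nat.le_mul_of_pos_right _ (by positivity)
      _ ≤ k * ((p + 2) * (p * p + p + 1)) := Nat.le_mul_of_pos_left _ hk
      _ = k * (p + 2) * (p * p + p + 1) := by ring
    have hring2 : k * (p + 2) ^ 3 + 2 * (k * (p + 2)) + (p + 2)
        = k * (p + 2) * (p + 1) + (p + 2) * (2 * (k * (p + 2)) + 1)
          + k * (p + 2) * (p * p + p + 1) := by ring
    have hneed : k * (p + 2) * (p + 1) + (p + 2) * (2 * (k * (p + 2)) + 1)
        ≤ k * (p + 2) ^ 3 + 2 * (k * (p + 2)) := by linarith [h1, hring2]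
    -- combine with hScard, hNbig, hT
    have hTle := hT.le
    have hTge := hT.ge
    linarith [hneed, hScard, hNbig, hTle, hTge]
  obtain ⟨A', hA'S, hA'card, hindep⟩ :=
    stmt7_indep_greedy nb (k * (p + 2)) (p + 2) S hd hself hcard2
  have hA'A : A' ⊆ A := hA'S.trans (filter_subset _ _)
  refine ⟨A', B', hA'A, hB'B, hA'card, hB'card, ?_⟩
  intro a ha b hb
  rw [eq_empty_iff_forall_notMem]
  intro c hc
  rw [mem_inter, mem_union] at hc
  obtain ⟨hcm, hcA' | hcB'⟩ := hc
  · exact hindep a ha c hcA' (mem_biUnion.mpr ⟨b, hb, hcm⟩)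
  · have hgood : m a b ∩ B' = ∅ := (mem_filter.mp (hA'S ha)).2 b hb
    have : c ∈ m a b ∩ B' := mem_inter.mpr ⟨hcm, hcB'⟩
    rw [hgood] at this
    exact notMem_empty c this
end
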